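/- arXiv:2201.00077 — 7 statements merged into one kernel-verified Lean document; each statement's English description precedes it below -/
import Mathlib

section
/- Let H be a complex Hilbert space, T a bounded self-adjoint operator on H, and P a bounded self-adjoint operator on H which is positive (⟨Pv, v⟩ ≥ 0 for all v) and invertible. Then T is positive (⟨Tv, v⟩ ≥ 0 for all v ∈ H) if and only if the spectrum of the bounded operator P⁻¹ ∘ T is contained in the nonnegative real half-line [0, ∞) ⊆ ℂ. -/
open ContinuousLinearMap

set_option synthInstance.maxHeartbeats 1000000 in
set_option maxHeartbeats 1000000 in
/-- Let `T` be bounded self-adjoint and `P` bounded self-adjoint, positive and invertible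
on a complex Hilbert space. Then `T` is positive iff the spectrum of `P⁻¹ ∘ T` is
contained in the nonnegative real half-line in `ℂ`. -/
theorem positive_iff_spectrum_nonneg
    {H : Type*} [NormedAddCommGroup H] [InnerProductSpace ℂ H] [CompleteSpace H]
    (T P Pinv : H →L[ℂ] H)
    (hT : IsSelfAdjoint T) (hP : IsSelfAdjoint P)
    (hPpos : ∀ v : H, 0 ≤ (inner ℂ (P v) v : ℂ).re)
    (hPinv1 : Pinv.comp P = ContinuousLinearMap.id ℂ H)
    (hPinv2 : P.comp Pinv = ContinuousLinearMap.id ℂ H) :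
    (∀ v : H, 0 ≤ (inner ℂ (T v) v : ℂ).re) ↔
      spectrum ℂ (Pinv.comp T) ⊆ {z : ℂ | 0 ≤ z.re ∧ z.im = 0} := by

  have h1 : Pinv * P = (1 : H →L[ℂ] H) := hPinv1
  have h2 : P * Pinv = (1 : H →L[ℂ] H) := hPinv2
  -- P is nonnegative
  have hPnn : (0 : H →L[ℂ] H) ≤ P := by
    rw [ContinuousLinearMap.nonneg_iff_isPositive]
    exact ⟨ContinuousLinearMap.isSelfAdjoint_iff_isSymmetric.mp hP, fun x => hPpos x⟩
  -- star Pinv = Pinv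
  have hPinvSa : IsSelfAdjoint Pinv := by
    have : star Pinv = star Pinv * (P * Pinv) := by rw [h2, mul_one]
    rw [isSelfAdjoint_iff, this, ← mul_assoc]
    have : star Pinv * P = 1 := by
      calc star Pinv * P = star Pinv * star P := by rw [hP.star_eq]
        _ = star (P * Pinv) := by rw [star_mul]
        _ = 1 := by rw [h2, star_one]
    rw [this, one_mul]
  -- the square root of P
  set Q := CFC.sqrt P with hQdef
  have hQnn : (0 : H →L[ℂ] H) ≤ Q := CFC.sqrt_nonneg (a := P)
  have hQsa : IsSelfAdjoint Q := IsSelfAdjoint.of_nonneg hQnn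
  have hQQ : Q * Q = P := CFC.sqrt_mul_sqrt_self P hPnn
  -- Q commutes with P, hence with Pinv
  have hQP : Q * P = P * Q := by rw [← hQQ, mul_assoc, ← mul_assoc]
  have hQPinv : Pinv * Q = Q * Pinv := by
    calc Pinv * Q = Pinv * Q * (P * Pinv) := by rw [h2, mul_one]
      _ = Pinv * (Q * P) * Pinv := by noncomm_ring
      _ = Pinv * (P * Q) * Pinv := by rw [hQP]
      _ = (Pinv * P) * (Q * Pinv) := by noncomm_ring
      _ = Q * Pinv := by rw [h1, one_mul]
  -- Q is a unit
  have huv : Q * (Q * Pinv) = 1 := by rw [← mul_assoc, hQQ, h2]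
  have hvu : (Q * Pinv) * Q = 1 := by rw [← hQPinv, mul_assoc, hQQ, h1]
  set u : (H →L[ℂ] H)ˣ := ⟨Q, Q * Pinv, huv, hvu⟩ with hu
  have huval : (u : H →L[ℂ] H) = Q := rfl
  have huinv : ((u⁻¹ : (H →L[ℂ] H)ˣ) : H →L[ℂ] H) = Q * Pinv := rfl
  -- star of u⁻¹
  have hUinvSa : IsSelfAdjoint ((u⁻¹ : (H →L[ℂ] H)ˣ) : H →L[ℂ] H) := by
    rw [isSelfAdjoint_iff, huinv, star_mul, hPinvSa.star_eq, hQsa.star_eq, hQPinv]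
  -- Pinv = u⁻¹ * u⁻¹
  have hPinvQQ : ((u⁻¹ : (H →L[ℂ] H)ˣ) : H →L[ℂ] H) * ((u⁻¹ : (H →L[ℂ] H)ˣ) : H →L[ℂ] H) = Pinv := by
    rw [huinv]
    calc (Q * Pinv) * (Q * Pinv) = Q * (Pinv * Q) * Pinv := by noncomm_ring
      _ = Q * (Q * Pinv) * Pinv := by rw [hQPinv]
      _ = (Q * Q) * Pinv * Pinv := by noncomm_ring
      _ = (P * Pinv) * Pinv := by rw [hQQ, mul_assoc]
      _ = Pinv := by rw [h2, one_mul]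
  -- the symmetrized operator S
  set S : H →L[ℂ] H := ((u⁻¹ : (H →L[ℂ] H)ˣ) : H →L[ℂ] H) * T * ((u⁻¹ : (H →L[ℂ] H)ˣ) : H →L[ℂ] H) with hSdef
  have hSsa : IsSelfAdjoint S := by
    rw [isSelfAdjoint_iff, hSdef, star_mul, star_mul, hUinvSa.star_eq, hT.star_eq, mul_assoc]
  -- conjugation identity : u * (Pinv * T) * u⁻¹ = S
  have hconj : (u : H →L[ℂ] H) * (Pinv * T) * ((u⁻¹ : (H →L[ℂ] H)ˣ) : H →L[ℂ] H) = S := by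
    rw [hSdef, huval, huinv, ← hPinvQQ, huinv]
    noncomm_ring
  have hspec : spectrum ℂ (Pinv * T) = spectrum ℂ S := by
    rw [← hconj, spectrum.units_conjugate]
  -- positivity transfer
  have hTS : (0 : H →L[ℂ] H) ≤ T ↔ (0 : H →L[ℂ] H) ≤ S := by
    constructor
    · intro h
      have := star_left_conjugate_nonneg h ((u⁻¹ : (H →L[ℂ] H)ˣ) : H →L[ℂ] H)
      rwa [hUinvSa.star_eq, ← hSdef] at this
    · intro h
      have := star_left_conjugate_nonneg h ((u : (H →L[ℂ] H)ˣ) : H →L[ℂ] H)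
      rw [huval, hQsa.star_eq, ← huval] at this
      have hT' : (u : H →L[ℂ] H) * S * (u : H →L[ℂ] H) = T := by
        rw [hSdef]
        calc (u : H →L[ℂ] H) * (((u⁻¹ : (H →L[ℂ] H)ˣ) : H →L[ℂ] H) * T * ((u⁻¹ : (H →L[ℂ] H)ˣ) : H →L[ℂ] H)) * (u : H →L[ℂ] H)
            = ((u : H →L[ℂ] H) * ((u⁻¹ : (H →L[ℂ] H)ˣ) : H →L[ℂ] H)) * T * (((u⁻¹ : (H →L[ℂ] H)ˣ) : H →L[ℂ] H) * (u : H →L[ℂ] H)) := by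
              noncomm_ring
          _ = T := by rw [u.mul_inv, u.inv_mul, one_mul, mul_one]
      rwa [mul_assoc, ← mul_assoc, hT'] at this
  -- spectrum of S
  have hSr := hSsa.spectrumRestricts
  have himg : (fun x : ℝ => (x : ℂ)) '' spectrum ℝ S = spectrum ℂ S := hSr.algebraMap_image
  have hSnn : (0 : H →L[ℂ] H) ≤ S ↔ ∀ x ∈ spectrum ℝ S, 0 ≤ x :=
    StarOrderedRing.nonneg_iff_spectrum_nonneg (R := ℝ) S hSsa
  -- translate the LHS
  have hLHS : (∀ v : H, 0 ≤ (inner ℂ (T v) v : ℂ).re) ↔ (0 : H →L[ℂ] H) ≤ T := by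
    rw [ContinuousLinearMap.nonneg_iff_isPositive]
    exact ⟨fun h => ⟨ContinuousLinearMap.isSelfAdjoint_iff_isSymmetric.mp hT, fun x => h x⟩, fun h x => h.2 x⟩
  have hPT : Pinv.comp T = (Pinv * T : H →L[ℂ] H) := rfl
  rw [hLHS, hTS, hSnn, hPT, hspec, ← himg]
  constructor
  · rintro h z ⟨x, hx, rfl⟩
    exact ⟨h x hx, by simp⟩
  · intro h x hx
    have := h ⟨x, hx, rfl⟩
    simpa using this.1
end

section
/- For every t > 0: (i) for every continuous function f : Ω → ℂ, the function I_t f(η) = ∫_Ω d(ξ, η)^{-(1-2t)D} f(ξ) dν(ξ) is continuous on Ω; and (ii) the resulting linear operator I_t : C(Ω) → C(Ω) (with the supremum norm) is a compact operator, i.e. the image of the unit ball of C(Ω) is relatively compact in C(Ω). -/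
open MeasureTheory Metric
open scoped ENNReal
section KSAux
set_option linter.unusedSectionVars false
set_option linter.unusedVariables false

variable {Ω : Type*} [MetricSpace Ω] [CompactSpace Ω] [MeasurableSpace Ω] [BorelSpace Ω]

lemma norm_int_le (ν : Measure Ω) (g : Ω → ℝ) (f : C(Ω, ℂ)) (c : ℝ) (hc : 0 ≤ c)
    (h : ∫⁻ ξ, ENNReal.ofReal |g ξ| ∂ν ≤ ENNReal.ofReal c) :
    ‖∫ ξ, (g ξ : ℂ) * f ξ ∂ν‖ ≤ c * ‖f‖ := by
  have h1 : ‖∫ ξ, (g ξ : ℂ) * f ξ ∂ν‖ ≤ (∫⁻ ξ, ENNReal.ofReal ‖(g ξ : ℂ) * f ξ‖ ∂ν).toReal :=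
    norm_integral_le_lintegral_norm _
  refine h1.trans ?_
  have h2 : ∫⁻ ξ, ENNReal.ofReal ‖(g ξ : ℂ) * f ξ‖ ∂ν ≤ ENNReal.ofReal (c * ‖f‖) := by
    have hb : ∀ ξ, ENNReal.ofReal ‖(g ξ : ℂ) * f ξ‖ ≤ ENNReal.ofReal |g ξ| * ENNReal.ofReal ‖f‖ := by
      intro ξ
      rw [← ENNReal.ofReal_mul (abs_nonneg _)]
      apply ENNReal.ofReal_le_ofReal
      rw [norm_mul, Complex.norm_real, Real.norm_eq_abs]
      exact mul_le_mul_of_nonneg_left (f.norm_coe_le_norm ξ) (abs_nonneg _)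
    calc ∫⁻ ξ, ENNReal.ofReal ‖(g ξ : ℂ) * f ξ‖ ∂ν
        ≤ ∫⁻ ξ, ENNReal.ofReal |g ξ| * ENNReal.ofReal ‖f‖ ∂ν := lintegral_mono hb
      _ ≤ (∫⁻ ξ, ENNReal.ofReal |g ξ| ∂ν) * ENNReal.ofReal ‖f‖ :=
          (lintegral_mul_const' _ _ ENNReal.ofReal_ne_top).le
      _ ≤ ENNReal.ofReal c * ENNReal.ofReal ‖f‖ := mul_le_mul_of_nonneg_right h zero_le
      _ = ENNReal.ofReal (c * ‖f‖) := (ENNReal.ofReal_mul hc).symm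
  exact ENNReal.toReal_le_of_le_ofReal (mul_nonneg hc (norm_nonneg f)) h2

lemma lint_norm_bound (ν : Measure Ω) (g : Ω → ℝ) (f : C(Ω, ℂ)) (c : ℝ) (hc : 0 ≤ c)
    (h : ∫⁻ ξ, ENNReal.ofReal |g ξ| ∂ν ≤ ENNReal.ofReal c) :
    ∫⁻ ξ, ENNReal.ofReal ‖(g ξ : ℂ) * f ξ‖ ∂ν ≤ ENNReal.ofReal (c * ‖f‖) := by
  have hb : ∀ ξ, ENNReal.ofReal ‖(g ξ : ℂ) * f ξ‖ ≤ ENNReal.ofReal |g ξ| * ENNReal.ofReal ‖f‖ := by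
    intro ξ
    rw [← ENNReal.ofReal_mul (abs_nonneg _)]
    apply ENNReal.ofReal_le_ofReal
    rw [norm_mul, Complex.norm_real, Real.norm_eq_abs]
    exact mul_le_mul_of_nonneg_left (f.norm_coe_le_norm ξ) (abs_nonneg _)
  calc ∫⁻ ξ, ENNReal.ofReal ‖(g ξ : ℂ) * f ξ‖ ∂ν
      ≤ ∫⁻ ξ, ENNReal.ofReal |g ξ| * ENNReal.ofReal ‖f‖ ∂ν := lintegral_mono hb
    _ ≤ (∫⁻ ξ, ENNReal.ofReal |g ξ| ∂ν) * ENNReal.ofReal ‖f‖ :=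
        (lintegral_mul_const' _ _ ENNReal.ofReal_ne_top).le
    _ ≤ ENNReal.ofReal c * ENNReal.ofReal ‖f‖ := mul_le_mul_of_nonneg_right h zero_le
    _ = ENNReal.ofReal (c * ‖f‖) := (ENNReal.ofReal_mul hc).symm

lemma integ_mul (ν : Measure Ω) (g : Ω → ℝ) (hg : Measurable g) (f : C(Ω, ℂ)) (c : ℝ) (hc : 0 ≤ c)
    (h : ∫⁻ ξ, ENNReal.ofReal |g ξ| ∂ν ≤ ENNReal.ofReal c) :
    Integrable (fun ξ => (g ξ : ℂ) * f ξ) ν := by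
  refine ⟨((Complex.measurable_ofReal.comp hg).aestronglyMeasurable).mul
    f.continuous.aestronglyMeasurable, ?_⟩
  rw [hasFiniteIntegral_iff_norm]
  exact (lint_norm_bound ν g f c hc h).trans_lt ENNReal.ofReal_lt_top

theorem abstract_compact (ν : Measure Ω) [IsProbabilityMeasure ν] (k : Ω → Ω → ℝ)
    (hmeas : ∀ η, Measurable (k η))
    (M : ℝ) (hM : 0 ≤ M)
    (hbound : ∀ η, ∫⁻ ξ, ENNReal.ofReal |k η ξ| ∂ν ≤ ENNReal.ofReal M)
    (hequi : ∀ ε : ℝ, 0 < ε → ∃ δ : ℝ, 0 < δ ∧ ∀ η η' : Ω, dist η η' < δ →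
        ∫⁻ ξ, ENNReal.ofReal |k η ξ - k η' ξ| ∂ν ≤ ENNReal.ofReal ε) :
    (∀ f : C(Ω, ℂ), Continuous fun η => ∫ ξ, (k η ξ : ℂ) * f ξ ∂ν) ∧
    ∃ T : C(Ω, ℂ) →L[ℂ] C(Ω, ℂ),
      (∀ f η, T f η = ∫ ξ, (k η ξ : ℂ) * f ξ ∂ν) ∧ IsCompactOperator ⇑T := by
  have hint : ∀ (f : C(Ω, ℂ)) η, Integrable (fun ξ => (k η ξ : ℂ) * f ξ) ν :=
    fun f η => integ_mul ν _ (hmeas η) f M hM (hbound η)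
  have hdiff : ∀ (f : C(Ω, ℂ)) (η η' : Ω) (c : ℝ), 0 ≤ c →
      (∫⁻ ξ, ENNReal.ofReal |k η ξ - k η' ξ| ∂ν ≤ ENNReal.ofReal c) →
      ‖(∫ ξ, (k η ξ : ℂ) * f ξ ∂ν) - ∫ ξ, (k η' ξ : ℂ) * f ξ ∂ν‖ ≤ c * ‖f‖ := by
    intro f η η' c hc h
    rw [← integral_sub (hint f η) (hint f η')]
    have heq : (fun ξ => (k η ξ : ℂ) * f ξ - (k η' ξ : ℂ) * f ξ)
        = fun ξ => ((k η ξ - k η' ξ : ℝ) : ℂ) * f ξ := by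
      funext ξ; push_cast; ring
    rw [heq]
    exact norm_int_le ν _ f c hc h
  have hcont : ∀ f : C(Ω, ℂ), Continuous fun η => ∫ ξ, (k η ξ : ℂ) * f ξ ∂ν := by
    intro f
    rw [Metric.continuous_iff]
    intro η ε hε
    obtain ⟨δ, hδ, hδ2⟩ := hequi (ε / (‖f‖ + 1)) (by positivity)
    refine ⟨δ, hδ, fun η' hd => ?_⟩
    rw [dist_eq_norm]
    have h1 := hdiff f η' η (ε / (‖f‖ + 1)) (by positivity) (hδ2 η' η hd)
    refine h1.trans_lt ?_
    rw [div_mul_eq_mul_div, div_lt_iff₀ (by positivity)]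
    nlinarith [norm_nonneg f]
  refine ⟨hcont, ?_⟩
  -- the linear map
  let Tlin : C(Ω, ℂ) →ₗ[ℂ] C(Ω, ℂ) :=
    { toFun := fun f => ⟨fun η => ∫ ξ, (k η ξ : ℂ) * f ξ ∂ν, hcont f⟩
      map_add' := by
        intro f g
        ext η
        simp only [ContinuousMap.coe_mk, ContinuousMap.add_apply]
        rw [← integral_add (hint f η) (hint g η)]
        apply integral_congr_ae
        filter_upwards with ξ
        first
        | ring
        | (simp only [ContinuousMap.add_apply]; ring)
      map_smul' := by
        intro c f
        ext η
        simp only [ContinuousMap.coe_mk, ContinuousMap.smul_apply, RingHom.id_apply]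
        rw [← integral_smul]
        apply integral_congr_ae
        filter_upwards with ξ
        first
        | (simp only [smul_eq_mul]; ring)
        | (simp only [ContinuousMap.smul_apply, smul_eq_mul]; ring) }
  have hTnorm : ∀ f : C(Ω, ℂ), ‖Tlin f‖ ≤ M * ‖f‖ := by
    intro f
    refine (ContinuousMap.norm_le _ (by positivity)).2 fun η => ?_
    exact norm_int_le ν _ f M hM (hbound η)
  refine ⟨Tlin.mkContinuous M hTnorm, fun f η => rfl, ?_⟩
  -- compactness
  choose δ hδpos hδ using fun n : ℕ => hequi (1 / (n + 1)) (by positivity)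
  set S : Set C(Ω, ℂ) := {g | (∀ x, g x ∈ Metric.closedBall (0 : ℂ) M) ∧
    ∀ (n : ℕ) (η η' : Ω), dist η η' < δ n → ‖g η - g η'‖ ≤ 1 / (n + 1)} with hSdef
  have hTS : ∀ f : C(Ω, ℂ), ‖f‖ ≤ 1 → Tlin f ∈ S := by
    intro f hf
    constructor
    · intro x
      rw [Metric.mem_closedBall, dist_zero_right]
      calc ‖(Tlin f) x‖ ≤ ‖Tlin f‖ := (Tlin f).norm_coe_le_norm x
        _ ≤ M * ‖f‖ := hTnorm f
        _ ≤ M * 1 := mul_le_mul_of_nonneg_left hf hM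
        _ = M := mul_one M
    · intro n η η' hd
      have := hdiff f η η' (1 / (n + 1)) (by positivity) (hδ n η η' hd)
      calc ‖(Tlin f) η - (Tlin f) η'‖ ≤ (1 / (n + 1)) * ‖f‖ := this
        _ ≤ (1 / (n + 1)) * 1 := mul_le_mul_of_nonneg_left hf (by positivity)
        _ = 1 / (n + 1) := mul_one _
  have hScompact : IsCompact S := by
    apply ArzelaAscoli.isCompact_of_equicontinuous
    · -- pointwise compactness
      have himg : ContinuousMap.toFun '' S = {u : Ω → ℂ | (∀ x, u x ∈ Metric.closedBall (0 : ℂ) M) ∧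
          ∀ (n : ℕ) (η η' : Ω), dist η η' < δ n → ‖u η - u η'‖ ≤ 1 / (n + 1)} := by
        ext u
        constructor
        · rintro ⟨g, hg, rfl⟩
          exact hg
        · rintro ⟨h1, h2⟩
          have hucont : Continuous u := by
            rw [Metric.continuous_iff]
            intro x ε hε
            obtain ⟨n, hn⟩ := exists_nat_one_div_lt hε
            refine ⟨δ n, hδpos n, fun y hy => ?_⟩
            rw [dist_eq_norm]
            exact (h2 n y x hy).trans_lt (by exact_mod_cast hn)
          exact ⟨⟨u, hucont⟩, ⟨h1, h2⟩, rfl⟩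
      rw [himg]
      have hsub : {u : Ω → ℂ | (∀ x, u x ∈ Metric.closedBall (0 : ℂ) M) ∧
          ∀ (n : ℕ) (η η' : Ω), dist η η' < δ n → ‖u η - u η'‖ ≤ 1 / (n + 1)}
          ⊆ Set.univ.pi fun _ : Ω => Metric.closedBall (0 : ℂ) M := by
        intro u hu
        exact fun x _ => hu.1 x
      refine IsCompact.of_isClosed_subset
        (isCompact_univ_pi fun _ => isCompact_closedBall 0 M) ?_ hsub
      have c1 : IsClosed {u : Ω → ℂ | ∀ x, u x ∈ Metric.closedBall (0 : ℂ) M} := by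
        have he : {u : Ω → ℂ | ∀ x, u x ∈ Metric.closedBall (0 : ℂ) M}
            = Set.univ.pi fun _ : Ω => Metric.closedBall (0 : ℂ) M := by
          ext u; simp
        rw [he]
        exact isClosed_set_pi fun _ _ => Metric.isClosed_closedBall
      have c2 : IsClosed {u : Ω → ℂ |
          ∀ (n : ℕ) (η η' : Ω), dist η η' < δ n → ‖u η - u η'‖ ≤ 1 / (n + 1)} := by
        have he : {u : Ω → ℂ | ∀ (n : ℕ) (η η' : Ω), dist η η' < δ n → ‖u η - u η'‖ ≤ 1 / (n + 1)}
            = ⋂ (n : ℕ) (η : Ω) (η' : Ω),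
              {u : Ω → ℂ | dist η η' < δ n → ‖u η - u η'‖ ≤ 1 / (n + 1)} := by
          ext u; simp only [Set.mem_iInter, Set.mem_setOf_eq]
        rw [he]
        refine isClosed_iInter fun n => isClosed_iInter fun η => isClosed_iInter fun η' => ?_
        by_cases h : dist η η' < δ n
        · have : {u : Ω → ℂ | dist η η' < δ n → ‖u η - u η'‖ ≤ 1 / (n + 1)}
              = {u : Ω → ℂ | ‖u η - u η'‖ ≤ 1 / (n + 1)} := by
            ext u; simp [h]
          rw [this]
          exact isClosed_le (((continuous_apply η).sub (continuous_apply η')).norm)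
            continuous_const
        · have : {u : Ω → ℂ | dist η η' < δ n → ‖u η - u η'‖ ≤ 1 / (n + 1)} = Set.univ := by
            ext u; simp [h]
          rw [this]
          exact isClosed_univ
      exact c1.inter c2
    · -- equicontinuity
      intro x
      rw [Metric.equicontinuousAt_iff]
      intro ε hε
      obtain ⟨n, hn⟩ := exists_nat_one_div_lt hε
      refine ⟨δ n, hδpos n, fun y hy g => ?_⟩
      rw [dist_eq_norm]
      exact ((g : S).2.2 n x y (by rwa [dist_comm] at hy)).trans_lt (by exact_mod_cast hn)
  refine ⟨S, hScompact, ?_⟩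
  refine Filter.mem_of_superset (Metric.ball_mem_nhds 0 one_pos) fun f hf => ?_
  exact hTS f (le_of_lt (by simpa [mem_ball_zero_iff] using hf))

-- Lipschitz estimate for rpow away from 0
lemma rpow_lip {e r : ℝ} (he : e < 0) (hr : 0 < r) {a b : ℝ} (ha : r ≤ a) (hb : r ≤ b) :
    |a ^ e - b ^ e| ≤ |e| * r ^ (e - 1) * |a - b| := by
  have hconv : Convex ℝ (Set.Ici r) := convex_Ici r
  have hderiv : ∀ x ∈ Set.Ici r, HasDerivWithinAt (fun x : ℝ => x ^ e)
      (e * x ^ (e - 1)) (Set.Ici r) x := by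
    intro x hx
    exact (Real.hasDerivAt_rpow_const (Or.inl (ne_of_gt (hr.trans_le hx)))).hasDerivWithinAt
  have hbound : ∀ x ∈ Set.Ici r, ‖e * x ^ (e - 1)‖ ≤ |e| * r ^ (e - 1) := by
    intro x hx
    rw [norm_mul, Real.norm_eq_abs, Real.norm_eq_abs,
      abs_of_nonneg (Real.rpow_nonneg (le_of_lt (hr.trans_le hx)) (e - 1))]
    exact mul_le_mul_of_nonneg_left
      (Real.rpow_le_rpow_of_nonpos hr hx (by linarith)) (abs_nonneg e)
  have := hconv.norm_image_sub_le_of_norm_hasDerivWithin_le hderiv hbound hb ha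
  simpa [Real.norm_eq_abs] using this

lemma term_eq {C' D e ε : ℝ} (hC' : 0 < C') (hε : 0 < ε) (n : ℕ) :
    (ε / 2 ^ (n + 1)) ^ e * (C' * (2 * (ε / 2 ^ n)) ^ D)
      = (C' * (2:ℝ) ^ (D - e) * ε ^ (D + e)) * ((2:ℝ) ^ (-(D + e))) ^ n := by
  have h2 : (0:ℝ) < 2 := two_pos
  have hb1 : (0:ℝ) < ε / 2 ^ (n + 1) := by positivity
  have hb2 : (0:ℝ) < 2 * (ε / 2 ^ n) := by positivity
  have hL : (0:ℝ) < (ε / 2 ^ (n + 1)) ^ e * (C' * (2 * (ε / 2 ^ n)) ^ D) := by positivity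
  have hR : (0:ℝ) < (C' * (2:ℝ) ^ (D - e) * ε ^ (D + e)) * ((2:ℝ) ^ (-(D + e))) ^ n := by
    positivity
  apply Real.log_injOn_pos (Set.mem_Ioi.2 hL) (Set.mem_Ioi.2 hR)
  rw [Real.log_mul (ne_of_gt (by positivity)) (ne_of_gt (by positivity)),
    Real.log_mul (ne_of_gt (by positivity)) (ne_of_gt (by positivity)),
    Real.log_mul (ne_of_gt (by positivity)) (ne_of_gt (by positivity)),
    Real.log_mul (ne_of_gt (by positivity)) (ne_of_gt (by positivity)),
    Real.log_mul (ne_of_gt hC') (ne_of_gt (by positivity)),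
    Real.log_rpow h2, Real.log_rpow hε, Real.log_pow, Real.log_rpow h2,
    Real.log_rpow hb1, Real.log_rpow hb2,
    Real.log_div (ne_of_gt hε) (ne_of_gt (by positivity)),
    Real.log_mul (ne_of_gt h2) (ne_of_gt (by positivity)),
    Real.log_div (ne_of_gt hε) (ne_of_gt (by positivity)), Real.log_pow, Real.log_pow]
  push_cast
  ring

lemma key_est {Ω : Type*} [MetricSpace Ω] [MeasurableSpace Ω] [BorelSpace Ω]
    (ν : Measure Ω) [IsProbabilityMeasure ν]
    {D e C' : ℝ} (hD : 0 < D) (he : -D < e) (he' : e < 0) (hC' : 0 < C')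
    (hub : ∀ (ξ : Ω) (r : ℝ), 0 < r → ν (ball ξ r) ≤ ENNReal.ofReal (C' * r ^ D)) :
    ∃ K : ℝ, 0 < K ∧ ∀ (η : Ω) (ε : ℝ), 0 < ε →
      ∫⁻ ξ in ball η ε, ENNReal.ofReal (dist ξ η ^ e) ∂ν
        ≤ ENNReal.ofReal (K * ε ^ (D + e)) := by
  classical
  have hq0 : (0:ℝ) < 2 ^ (-(D + e)) := Real.rpow_pos_of_pos two_pos _
  have hq1 : (2:ℝ) ^ (-(D + e)) < 1 :=
    Real.rpow_lt_one_of_one_lt_of_neg one_lt_two (by linarith)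
  set q : ℝ := (2:ℝ) ^ (-(D + e)) with hqdef
  have h1mq : (0:ℝ) < 1 - q := by linarith
  refine ⟨C' * 2 ^ (D - e) * (1 - q)⁻¹, by positivity, fun η ε hε => ?_⟩
  set F : Ω → ℝ≥0∞ := fun ξ => ENNReal.ofReal (dist ξ η ^ e) with hFdef
  set A : ℕ → Set Ω := fun n => closedBall η (ε / 2 ^ n) \ closedBall η (ε / 2 ^ (n + 1))
    with hAdef
  have hcover : ball η ε ⊆ {η} ∪ ⋃ n, A n := by
    intro ξ hξ
    rcases eq_or_lt_of_le (dist_nonneg : 0 ≤ dist ξ η) with h0 | h0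
    · left
      have : ξ = η := dist_eq_zero.1 h0.symm
      simp [this]
    · right
      have hd : dist ξ η < ε := mem_ball.1 hξ
      have hP : ∃ m : ℕ, ε / 2 ^ (m + 1) < dist ξ η := by
        obtain ⟨m, hm⟩ := pow_unbounded_of_one_lt (ε / dist ξ η) (one_lt_two (α := ℝ))
        refine ⟨m, ?_⟩
        rw [div_lt_iff₀ (by positivity)]
        rw [div_lt_iff₀ h0] at hm
        calc ε < 2 ^ m * dist ξ η := hm
          _ ≤ dist ξ η * 2 ^ (m + 1) := by
              rw [mul_comm]
              have : (2:ℝ) ^ m ≤ 2 ^ (m + 1) := by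
                apply pow_le_pow_right₀ one_le_two (Nat.le_succ m)
              nlinarith [dist_nonneg (x := ξ) (y := η)]
      set n := Nat.find hP with hn
      refine Set.mem_iUnion.2 ⟨n, ?_, ?_⟩
      · rw [mem_closedBall]
        rcases Nat.eq_zero_or_pos n with hn0 | hn0
        · rw [hn0]; simpa using hd.le
        · have hmin := Nat.find_min hP (show n - 1 < n from Nat.sub_lt hn0 one_pos)
          rw [not_lt] at hmin
          have : n - 1 + 1 = n := Nat.succ_pred_eq_of_pos hn0
          rwa [this] at hmin
      · rw [mem_closedBall, not_le]
        exact Nat.find_spec hP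
  have hA_est : ∀ n : ℕ, ∫⁻ ξ in A n, F ξ ∂ν
      ≤ ENNReal.ofReal ((ε / 2 ^ (n + 1)) ^ e * (C' * (2 * (ε / 2 ^ n)) ^ D)) := by
    intro n
    have hAm : MeasurableSet (A n) := measurableSet_closedBall.diff measurableSet_closedBall
    have h1 : ∫⁻ ξ in A n, F ξ ∂ν ≤ ∫⁻ _ in A n, ENNReal.ofReal ((ε / 2 ^ (n + 1)) ^ e) ∂ν := by
      refine setLIntegral_mono measurable_const fun ξ hξ => ?_
      have hgt : ε / 2 ^ (n + 1) < dist ξ η := by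
        have := hξ.2
        rwa [mem_closedBall, not_le] at this
      exact ENNReal.ofReal_le_ofReal
        (Real.rpow_le_rpow_of_nonpos (by positivity) hgt.le he'.le)
    refine h1.trans ?_
    rw [setLIntegral_const]
    have h2 : ν (A n) ≤ ENNReal.ofReal (C' * (2 * (ε / 2 ^ n)) ^ D) := by
      refine le_trans (measure_mono ?_) (hub η (2 * (ε / 2 ^ n)) (by positivity))
      intro ξ hξ
      have := hξ.1
      rw [mem_closedBall] at this
      rw [mem_ball]
      have hpos : (0:ℝ) < ε / 2 ^ n := by positivity
      linarith
    calc ENNReal.ofReal ((ε / 2 ^ (n + 1)) ^ e) * ν (A n)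
        ≤ ENNReal.ofReal ((ε / 2 ^ (n + 1)) ^ e)
          * ENNReal.ofReal (C' * (2 * (ε / 2 ^ n)) ^ D) := mul_le_mul_of_nonneg_left h2 zero_le
      _ = ENNReal.ofReal ((ε / 2 ^ (n + 1)) ^ e * (C' * (2 * (ε / 2 ^ n)) ^ D)) :=
          (ENNReal.ofReal_mul (by positivity)).symm
  have hsum : ∑' n : ℕ, ENNReal.ofReal ((ε / 2 ^ (n + 1)) ^ e * (C' * (2 * (ε / 2 ^ n)) ^ D))
      = ENNReal.ofReal (C' * 2 ^ (D - e) * ε ^ (D + e)) * (1 - ENNReal.ofReal q)⁻¹ := by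
    have : ∀ n : ℕ, ENNReal.ofReal ((ε / 2 ^ (n + 1)) ^ e * (C' * (2 * (ε / 2 ^ n)) ^ D))
        = ENNReal.ofReal (C' * 2 ^ (D - e) * ε ^ (D + e)) * (ENNReal.ofReal q) ^ n := by
      intro n
      rw [term_eq hC' hε n, ENNReal.ofReal_mul (by positivity), ENNReal.ofReal_pow hq0.le]
    rw [tsum_congr this, ENNReal.tsum_mul_left, ENNReal.tsum_geometric]
  have h1q : 1 - ENNReal.ofReal q = ENNReal.ofReal (1 - q) := by
    rw [← ENNReal.ofReal_one, ← ENNReal.ofReal_sub _ hq0.le]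
  calc ∫⁻ ξ in ball η ε, F ξ ∂ν ≤ ∫⁻ ξ in {η} ∪ ⋃ n, A n, F ξ ∂ν :=
        lintegral_mono_set hcover
    _ ≤ (∫⁻ ξ in {η}, F ξ ∂ν) + ∫⁻ ξ in ⋃ n, A n, F ξ ∂ν := lintegral_union_le _ _ _
    _ ≤ 0 + ∑' n : ℕ, ∫⁻ ξ in A n, F ξ ∂ν := by
        gcongr
        · rw [lintegral_singleton]
          simp [hFdef, Real.zero_rpow (ne_of_lt he')]
        · exact lintegral_iUnion_le _ _
    _ = ∑' n : ℕ, ∫⁻ ξ in A n, F ξ ∂ν := zero_add _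
    _ ≤ ∑' n : ℕ, ENNReal.ofReal ((ε / 2 ^ (n + 1)) ^ e * (C' * (2 * (ε / 2 ^ n)) ^ D)) :=
        ENNReal.tsum_le_tsum hA_est
    _ = ENNReal.ofReal (C' * 2 ^ (D - e) * ε ^ (D + e)) * (1 - ENNReal.ofReal q)⁻¹ := hsum
    _ = ENNReal.ofReal (C' * 2 ^ (D - e) * (1 - q)⁻¹ * ε ^ (D + e)) := by
        rw [h1q, ← ENNReal.ofReal_inv_of_pos (by linarith), ← ENNReal.ofReal_mul (by positivity)]
        ring_nf

end KSAux

/-- For `t > 0`: (i) the Knapp–Stein operator maps continuous functions to continuous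
functions, and (ii) the resulting operator on `C(Ω,ℂ)` (sup norm) is a compact operator. -/
theorem knappStein_compact_continuousMap
    {Ω : Type*} [MetricSpace Ω] [CompactSpace Ω] [MeasurableSpace Ω] [BorelSpace Ω]
    (ν : Measure Ω) [IsProbabilityMeasure ν]
    (D : ℝ) (hD : 0 < D)
    (hdiam : Metric.diam (Set.univ : Set Ω) ≤ 1)
    (Cν : ℝ) (hCν : 1 ≤ Cν)
    (hAR : ∀ ξ : Ω, ∀ r : ℝ, 0 < r → r ≤ Metric.diam (Set.univ : Set Ω) →
      ENNReal.ofReal (Cν⁻¹ * r ^ D) ≤ ν (Metric.ball ξ r) ∧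
        ν (Metric.ball ξ r) ≤ ENNReal.ofReal (Cν * r ^ D)) :
    ∀ t : ℝ, 0 < t →
      (∀ f : C(Ω, ℂ), Continuous fun η : Ω =>
        ∫ ξ, ((dist ξ η ^ (-(1 - 2*t) * D) : ℝ) : ℂ) * f ξ ∂ν) ∧
      ∃ T : C(Ω, ℂ) →L[ℂ] C(Ω, ℂ),
        (∀ f : C(Ω, ℂ), ∀ η : Ω,
          T f η = ∫ ξ, ((dist ξ η ^ (-(1 - 2*t) * D) : ℝ) : ℂ) * f ξ ∂ν) ∧
        IsCompactOperator (⇑T) := by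
  intro t ht
  set e : ℝ := -(1 - 2*t) * D with hedef
  set k : Ω → Ω → ℝ := fun η ξ => dist ξ η ^ e with hkdef
  have hmeas : ∀ η, Measurable (k η) := fun η =>
    (measurable_id.dist measurable_const).pow measurable_const
  have hknonneg : ∀ η ξ, 0 ≤ k η ξ := fun η ξ => Real.rpow_nonneg dist_nonneg e
  have hdist1 : ∀ ξ η : Ω, dist ξ η ≤ 1 := fun ξ η =>
    (dist_le_diam_of_mem isCompact_univ.isBounded (Set.mem_univ ξ) (Set.mem_univ η)).trans hdiam
  rcases le_or_gt 0 e with he | he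
  · -- nonnegative exponent: continuous kernel
    have hbound : ∀ η, ∫⁻ ξ, ENNReal.ofReal |k η ξ| ∂ν ≤ ENNReal.ofReal 1 := by
      intro η
      have hpt : ∀ ξ, ENNReal.ofReal |k η ξ| ≤ ENNReal.ofReal 1 := by
        intro ξ
        apply ENNReal.ofReal_le_ofReal
        rw [abs_of_nonneg (hknonneg η ξ)]
        exact Real.rpow_le_one dist_nonneg (hdist1 ξ η) he
      calc ∫⁻ ξ, ENNReal.ofReal |k η ξ| ∂ν ≤ ∫⁻ _, ENNReal.ofReal 1 ∂ν := lintegral_mono hpt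
        _ = ENNReal.ofReal 1 := by rw [lintegral_const, measure_univ, mul_one]
    have hcontk : Continuous fun p : Ω × Ω => dist p.2 p.1 ^ e :=
      (continuous_snd.dist continuous_fst).rpow_const fun _ => Or.inr he
    have huc := CompactSpace.uniformContinuous_of_continuous hcontk
    rw [Metric.uniformContinuous_iff] at huc
    have hequi : ∀ ε : ℝ, 0 < ε → ∃ δ : ℝ, 0 < δ ∧ ∀ η η' : Ω, dist η η' < δ →
        ∫⁻ ξ, ENNReal.ofReal |k η ξ - k η' ξ| ∂ν ≤ ENNReal.ofReal ε := by
      intro ε hε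
      obtain ⟨δ, hδ, hδ2⟩ := huc ε hε
      refine ⟨δ, hδ, fun η η' hd => ?_⟩
      have hpt : ∀ ξ, ENNReal.ofReal |k η ξ - k η' ξ| ≤ ENNReal.ofReal ε := by
        intro ξ
        apply ENNReal.ofReal_le_ofReal
        have hdp : dist ((η, ξ) : Ω × Ω) (η', ξ) < δ := by
          rw [Prod.dist_eq]
          simp only [dist_self]
          rw [max_lt_iff]
          exact ⟨hd, hδ⟩
        have := hδ2 hdp
        rw [Real.dist_eq] at this
        exact this.le
      calc ∫⁻ ξ, ENNReal.ofReal |k η ξ - k η' ξ| ∂ν ≤ ∫⁻ _, ENNReal.ofReal ε ∂ν :=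
            lintegral_mono hpt
        _ = ENNReal.ofReal ε := by rw [lintegral_const, measure_univ, mul_one]
    exact abstract_compact ν k hmeas 1 zero_le_one hbound hequi
  · -- negative exponent
    have heD : -D < e := by nlinarith
    have hene : e ≠ 0 := ne_of_lt he
    by_cases hsing : ∀ ξ η : Ω, dist ξ η = 0
    · -- degenerate case : kernel identically zero
      have hz : ∀ η ξ, k η ξ = 0 := fun η ξ => by
        rw [hkdef]; simp only []; rw [hsing ξ η, Real.zero_rpow hene]
      have hbound : ∀ η, ∫⁻ ξ, ENNReal.ofReal |k η ξ| ∂ν ≤ ENNReal.ofReal 1 := by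
        intro η
        have : ∀ ξ, ENNReal.ofReal |k η ξ| ≤ ENNReal.ofReal 1 := fun ξ => by
          rw [hz η ξ]; simp
        calc ∫⁻ ξ, ENNReal.ofReal |k η ξ| ∂ν ≤ ∫⁻ _, ENNReal.ofReal 1 ∂ν := lintegral_mono this
          _ = ENNReal.ofReal 1 := by rw [lintegral_const, measure_univ, mul_one]
      have hequi : ∀ ε : ℝ, 0 < ε → ∃ δ : ℝ, 0 < δ ∧ ∀ η η' : Ω, dist η η' < δ →
          ∫⁻ ξ, ENNReal.ofReal |k η ξ - k η' ξ| ∂ν ≤ ENNReal.ofReal ε := by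
        intro ε hε
        refine ⟨1, one_pos, fun η η' _ => ?_⟩
        have : ∀ ξ, ENNReal.ofReal |k η ξ - k η' ξ| = 0 := fun ξ => by
          rw [hz η ξ, hz η' ξ]; simp
        rw [lintegral_congr this, lintegral_zero]
        exact zero_le
      exact abstract_compact ν k hmeas 1 zero_le_one hbound hequi
    · push_neg at hsing
      obtain ⟨ξ₀, η₀, hξη⟩ := hsing
      have hd0 : 0 < Metric.diam (Set.univ : Set Ω) :=
        lt_of_lt_of_le (lt_of_le_of_ne dist_nonneg (Ne.symm hξη))
          (dist_le_diam_of_mem isCompact_univ.isBounded (Set.mem_univ ξ₀) (Set.mem_univ η₀))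
      set d0 : ℝ := Metric.diam (Set.univ : Set Ω) with hd0def
      have hd0D : (0:ℝ) < d0 ^ D := Real.rpow_pos_of_pos hd0 D
      have hd0D1 : d0 ^ D ≤ 1 := Real.rpow_le_one (diam_nonneg) hdiam hD.le
      set C' : ℝ := Cν / d0 ^ D with hC'def
      have hC' : 0 < C' := by positivity
      have hCνC' : Cν ≤ C' := by
        rw [hC'def, le_div_iff₀ hd0D]
        nlinarith
      have hub : ∀ (ξ : Ω) (r : ℝ), 0 < r → ν (ball ξ r) ≤ ENNReal.ofReal (C' * r ^ D) := by
        intro ξ r hr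
        have hrD : (0:ℝ) ≤ r ^ D := Real.rpow_nonneg hr.le D
        rcases le_or_gt r d0 with hrd | hrd
        · refine ((hAR ξ r hr hrd).2).trans (ENNReal.ofReal_le_ofReal ?_)
          exact mul_le_mul_of_nonneg_right hCνC' hrD
        · have h1 : ν (ball ξ r) ≤ 1 := prob_le_one
          refine h1.trans ?_
          rw [ENNReal.one_le_ofReal]
          have hrD' : d0 ^ D ≤ r ^ D := Real.rpow_le_rpow diam_nonneg hrd.le hD.le
          calc (1:ℝ) ≤ Cν := hCν
            _ = C' * d0 ^ D := by rw [hC'def]; field_simp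
            _ ≤ C' * r ^ D := mul_le_mul_of_nonneg_left hrD' hC'.le
      obtain ⟨K, hK, hkey⟩ := key_est ν hD heD he hC' hub
      set p : ℝ := D + e with hpdef
      have hp : 0 < p := by rw [hpdef]; linarith
      -- global bound
      have habs : ∀ η ξ, |k η ξ| = k η ξ := fun η ξ => abs_of_nonneg (hknonneg η ξ)
      have hbound : ∀ η, ∫⁻ ξ, ENNReal.ofReal |k η ξ| ∂ν ≤ ENNReal.ofReal (K * 2 ^ p) := by
        intro η
        have h1 : ∫⁻ ξ, ENNReal.ofReal |k η ξ| ∂ν = ∫⁻ ξ, ENNReal.ofReal (k η ξ) ∂ν :=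
          lintegral_congr fun ξ => by rw [habs]
        rw [h1, ← setLIntegral_univ]
        have h2 : (Set.univ : Set Ω) ⊆ ball η 2 := fun ξ _ => by
          rw [mem_ball]
          exact lt_of_le_of_lt (hdist1 ξ η) one_lt_two
        exact (lintegral_mono_set h2).trans (hkey η 2 two_pos)
      have hMnn : (0:ℝ) ≤ K * 2 ^ p := by positivity
      -- equicontinuity
      have hequi : ∀ ε : ℝ, 0 < ε → ∃ δ : ℝ, 0 < δ ∧ ∀ η η' : Ω, dist η η' < δ →
          ∫⁻ ξ, ENNReal.ofReal |k η ξ - k η' ξ| ∂ν ≤ ENNReal.ofReal ε := by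
        intro ε hε
        set c0 : ℝ := K * 2 ^ p + K * 3 ^ p with hc0def
        have hc0 : 0 < c0 := by positivity
        set r : ℝ := min 1 ((ε / (2 * c0)) ^ p⁻¹) with hrdef
        have hr : 0 < r := lt_min one_pos (Real.rpow_pos_of_pos (by positivity) _)
        have hrp : c0 * r ^ p ≤ ε / 2 := by
          have h1 : r ^ p ≤ ε / (2 * c0) := by
            calc r ^ p ≤ ((ε / (2 * c0)) ^ p⁻¹) ^ p :=
                  Real.rpow_le_rpow hr.le (min_le_right _ _) hp.le
              _ = ε / (2 * c0) := Real.rpow_inv_rpow (by positivity) (ne_of_gt hp)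
          calc c0 * r ^ p ≤ c0 * (ε / (2 * c0)) := mul_le_mul_of_nonneg_left h1 hc0.le
            _ = ε / 2 := by field_simp
        set L : ℝ := |e| * r ^ (e - 1) with hLdef
        have hL : 0 ≤ L := mul_nonneg (abs_nonneg e) (Real.rpow_nonneg hr.le _)
        set δ : ℝ := min r (ε / (2 * (L + 1))) with hδdef
        have hδ : 0 < δ := lt_min hr (by positivity)
        refine ⟨δ, hδ, fun η η' hdist => ?_⟩
        have hδr : δ ≤ r := min_le_left _ _
        have hδL : δ ≤ ε / (2 * (L + 1)) := min_le_right _ _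
        set G : Ω → ℝ≥0∞ := fun ξ => ENNReal.ofReal |k η ξ - k η' ξ| with hGdef
        have hsplit : ∫⁻ ξ, G ξ ∂ν
            = (∫⁻ ξ in ball η (2*r), G ξ ∂ν) + ∫⁻ ξ in (ball η (2*r))ᶜ, G ξ ∂ν :=
          (lintegral_add_compl G measurableSet_ball).symm
        have hterm1 : ∫⁻ ξ in ball η (2*r), G ξ ∂ν ≤ ENNReal.ofReal (ε / 2) := by
          have hpt : ∀ ξ, G ξ ≤ ENNReal.ofReal (k η ξ) + ENNReal.ofReal (k η' ξ) := by
            intro ξ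
            rw [← ENNReal.ofReal_add (hknonneg η ξ) (hknonneg η' ξ)]
            apply ENNReal.ofReal_le_ofReal
            calc |k η ξ - k η' ξ| ≤ |k η ξ| + |k η' ξ| := abs_sub _ _
              _ = k η ξ + k η' ξ := by rw [habs, habs]
          have h1 : ∫⁻ ξ in ball η (2*r), G ξ ∂ν
              ≤ ∫⁻ ξ in ball η (2*r), (ENNReal.ofReal (k η ξ) + ENNReal.ofReal (k η' ξ)) ∂ν :=
            lintegral_mono fun ξ => hpt ξ
          have h2 : ∫⁻ ξ in ball η (2*r), (ENNReal.ofReal (k η ξ) + ENNReal.ofReal (k η' ξ)) ∂ν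
              = (∫⁻ ξ in ball η (2*r), ENNReal.ofReal (k η ξ) ∂ν)
                + ∫⁻ ξ in ball η (2*r), ENNReal.ofReal (k η' ξ) ∂ν :=
            lintegral_add_left ((hmeas η).ennreal_ofReal) _
          have h3 : ∫⁻ ξ in ball η (2*r), ENNReal.ofReal (k η ξ) ∂ν
              ≤ ENNReal.ofReal (K * (2*r) ^ p) := hkey η (2*r) (by positivity)
          have h4 : ∫⁻ ξ in ball η (2*r), ENNReal.ofReal (k η' ξ) ∂ν
              ≤ ENNReal.ofReal (K * (3*r) ^ p) := by
            refine le_trans (lintegral_mono_set ?_) (hkey η' (3*r) (by positivity))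
            intro ξ hξ
            rw [mem_ball] at hξ ⊢
            have : dist ξ η' ≤ dist ξ η + dist η η' := dist_triangle _ _ _
            have hdr : dist η η' < r := lt_of_lt_of_le hdist hδr
            linarith
          calc ∫⁻ ξ in ball η (2*r), G ξ ∂ν
              ≤ ENNReal.ofReal (K * (2*r) ^ p) + ENNReal.ofReal (K * (3*r) ^ p) := by
                rw [h2] at h1
                exact h1.trans (add_le_add h3 h4)
            _ = ENNReal.ofReal (K * (2*r) ^ p + K * (3*r) ^ p) :=
                (ENNReal.ofReal_add (by positivity) (by positivity)).symm
            _ ≤ ENNReal.ofReal (ε / 2) := by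
                apply ENNReal.ofReal_le_ofReal
                have h2r : (2*r) ^ p = 2 ^ p * r ^ p := Real.mul_rpow two_pos.le hr.le
                have h3r : (3*r) ^ p = 3 ^ p * r ^ p := Real.mul_rpow (by norm_num) hr.le
                calc K * (2*r) ^ p + K * (3*r) ^ p = c0 * r ^ p := by
                      rw [h2r, h3r, hc0def]; ring
                  _ ≤ ε / 2 := hrp
        have hterm2 : ∫⁻ ξ in (ball η (2*r))ᶜ, G ξ ∂ν ≤ ENNReal.ofReal (ε / 2) := by
          have hpt : ∀ ξ ∈ (ball η (2*r))ᶜ, G ξ ≤ ENNReal.ofReal (ε / 2) := by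
            intro ξ hξ
            have h1 : 2*r ≤ dist ξ η := by
              rw [Set.mem_compl_iff, mem_ball, not_lt] at hξ
              exact hξ
            have h2 : r ≤ dist ξ η' := by
              have := dist_triangle ξ η' η
              have h3 : dist η' η = dist η η' := dist_comm _ _
              have hdr : dist η η' < r := lt_of_lt_of_le hdist hδr
              linarith
            apply ENNReal.ofReal_le_ofReal
            have hlip := rpow_lip he hr (le_trans (by linarith) h1) h2
            calc |k η ξ - k η' ξ| ≤ |e| * r ^ (e-1) * |dist ξ η - dist ξ η'| := hlip
              _ ≤ L * dist η η' := by
                  have habs2 : |dist ξ η - dist ξ η'| ≤ dist η η' := by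
                    rw [dist_comm ξ η, dist_comm ξ η']
                    exact abs_dist_sub_le _ _ _
                  rw [hLdef]
                  exact mul_le_mul_of_nonneg_left habs2 (by positivity)
              _ ≤ ε / 2 := by
                  have : dist η η' ≤ ε / (2 * (L + 1)) := le_of_lt (lt_of_lt_of_le hdist hδL)
                  have hd' : 0 ≤ dist η η' := dist_nonneg
                  have key : L * dist η η' ≤ L * (ε / (2 * (L + 1))) :=
                    mul_le_mul_of_nonneg_left this hL
                  refine key.trans ?_
                  rw [← mul_div_assoc, div_le_div_iff₀ (by positivity) two_pos]
                  nlinarith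
          calc ∫⁻ ξ in (ball η (2*r))ᶜ, G ξ ∂ν
              ≤ ∫⁻ _ in (ball η (2*r))ᶜ, ENNReal.ofReal (ε / 2) ∂ν :=
                setLIntegral_mono measurable_const hpt
            _ = ENNReal.ofReal (ε / 2) * ν (ball η (2*r))ᶜ := setLIntegral_const _ _
            _ ≤ ENNReal.ofReal (ε / 2) * 1 := mul_le_mul_of_nonneg_left prob_le_one zero_le
            _ = ENNReal.ofReal (ε / 2) := mul_one _
        calc ∫⁻ ξ, G ξ ∂ν = _ := hsplit
          _ ≤ ENNReal.ofReal (ε / 2) + ENNReal.ofReal (ε / 2) := add_le_add hterm1 hterm2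
          _ = ENNReal.ofReal ε := by
              rw [← ENNReal.ofReal_add (by positivity) (by positivity)]
              norm_num
      exact abstract_compact ν k hmeas (K * 2 ^ p) hMnn hbound hequi
end

section
/- Let t > 0. For every v ∈ L²(Ω, ν) and every F ∈ L²(Ω × Ω, ν ⊗ ν), the function G(ξ) = ∫_Ω (F(ξ, η) − F(η, ξ)) · d(ξ, η)^{-(1/2−t)D} dν(η) is defined ν-a.e., belongs to L²(Ω, ν), and one has the adjoint identity ∫_Ω ∫_Ω (v(ξ) − v(η)) · conj(F(ξ, η)) · d(ξ, η)^{-(1/2−t)D} dν(ξ) dν(η) = ∫_Ω v(ξ) · conj(G(ξ)) dν(ξ). -/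
open MeasureTheory Metric
open scoped ENNReal

lemma pow_rpow_comm (x : ℝ) (hx : 0 ≤ x) (n : ℕ) (β : ℝ) : (x^n)^β = (x^β)^n := by
  rw [← Real.rpow_natCast x n, ← Real.rpow_mul hx, mul_comm, Real.rpow_mul hx,
    Real.rpow_natCast]

lemma kernel_bound {Ω : Type*} [MetricSpace Ω] [CompactSpace Ω] [MeasurableSpace Ω] [BorelSpace Ω]
    (ν : Measure Ω) [IsProbabilityMeasure ν]
    (D : ℝ) (hD : 0 < D)
    (hdiam : Metric.diam (Set.univ : Set Ω) ≤ 1)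
    (Cν : ℝ) (hCν : 1 ≤ Cν)
    (hAR : ∀ ξ : Ω, ∀ r : ℝ, 0 < r → r ≤ Metric.diam (Set.univ : Set Ω) →
      ENNReal.ofReal (Cν⁻¹ * r ^ D) ≤ ν (Metric.ball ξ r) ∧
        ν (Metric.ball ξ r) ≤ ENNReal.ofReal (Cν * r ^ D))
    (γ : ℝ) (hγ : -D < γ) :
    ∃ M : ℝ≥0∞, M ≠ ⊤ ∧ ∀ ξ : Ω, ∫⁻ η, ENNReal.ofReal (dist ξ η ^ γ) ∂ν ≤ M := by
  have hd1 : ∀ ξ η : Ω, dist ξ η ≤ 1 := fun ξ η =>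
    le_trans (Metric.dist_le_diam_of_mem (isCompact_univ.isBounded) trivial trivial) hdiam
  rcases le_or_gt 0 γ with hγ0 | hγ0
  · refine ⟨1, ENNReal.one_ne_top, fun ξ => ?_⟩
    calc ∫⁻ η, ENNReal.ofReal (dist ξ η ^ γ) ∂ν
        ≤ ∫⁻ _, 1 ∂ν := lintegral_mono fun η =>
          ENNReal.ofReal_le_one.mpr (Real.rpow_le_one dist_nonneg (hd1 ξ η) hγ0)
      _ = 1 := by simp
  rcases eq_or_lt_of_le (Metric.diam_nonneg (s := (Set.univ : Set Ω))) with hd0 | hd0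
  · refine ⟨1, ENNReal.one_ne_top, fun ξ => ?_⟩
    have : ∀ η : Ω, dist ξ η = 0 := fun η =>
      le_antisymm (le_trans (Metric.dist_le_diam_of_mem isCompact_univ.isBounded trivial trivial)
        hd0.ge) dist_nonneg
    calc ∫⁻ η, ENNReal.ofReal (dist ξ η ^ γ) ∂ν
        = ∫⁻ _, 0 ∂ν := by
          refine lintegral_congr fun η => ?_
          rw [this η, Real.zero_rpow hγ0.ne]; simp
      _ ≤ 1 := by simp
  · -- main case
    set dΩ := Metric.diam (Set.univ : Set Ω) with hdΩ
    set C₀ : ℝ := max (Cν * 2 ^ D) ((2 / dΩ) ^ D) with hC₀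
    have hC₀pos : 0 < C₀ := lt_of_lt_of_le (by positivity) (le_max_left _ _)
    have hball : ∀ ξ : Ω, ∀ r : ℝ, 0 < r →
        ν (Metric.closedBall ξ r) ≤ ENNReal.ofReal (C₀ * r ^ D) := by
      intro ξ r hr
      rcases le_or_gt (2 * r) dΩ with h2r | h2r
      · calc ν (Metric.closedBall ξ r) ≤ ν (Metric.ball ξ (2 * r)) :=
              measure_mono (Metric.closedBall_subset_ball (by linarith))
          _ ≤ ENNReal.ofReal (Cν * (2 * r) ^ D) := (hAR ξ (2 * r) (by linarith) h2r).2
          _ ≤ ENNReal.ofReal (C₀ * r ^ D) := by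
              apply ENNReal.ofReal_le_ofReal
              rw [Real.mul_rpow (by norm_num) hr.le]
              calc Cν * ((2:ℝ) ^ D * r ^ D) = (Cν * 2 ^ D) * r ^ D := by ring
                _ ≤ C₀ * r ^ D := by
                    apply mul_le_mul_of_nonneg_right (le_max_left _ _)
                    positivity
      · calc ν (Metric.closedBall ξ r) ≤ ν Set.univ := measure_mono (Set.subset_univ _)
          _ = 1 := measure_univ
          _ ≤ ENNReal.ofReal (C₀ * r ^ D) := by
              rw [show (1:ℝ≥0∞) = ENNReal.ofReal 1 by simp]
              apply ENNReal.ofReal_le_ofReal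
              have h1 : (1:ℝ) ≤ (2 * r / dΩ) ^ D := by
                apply Real.one_le_rpow (by rw [le_div_iff₀ hd0]; linarith) hD.le
              calc (1:ℝ) ≤ (2 * r / dΩ) ^ D := h1
                _ = (2 / dΩ) ^ D * r ^ D := by
                    rw [← Real.mul_rpow (by positivity) hr.le]
                    ring_nf
                _ ≤ C₀ * r ^ D := by
                    apply mul_le_mul_of_nonneg_right (le_max_right _ _)
                    positivity
    set q : ℝ := (1/2:ℝ) ^ (γ + D) with hq
    have hqpos : 0 < q := Real.rpow_pos_of_pos (by norm_num) _
    have hq1 : q < 1 := Real.rpow_lt_one (by norm_num) (by norm_num) (by linarith)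
    refine ⟨ENNReal.ofReal ((1/2:ℝ) ^ γ * C₀) * (1 - ENNReal.ofReal q)⁻¹, ?_, fun ξ => ?_⟩
    · apply ENNReal.mul_ne_top ENNReal.ofReal_ne_top
      rw [Ne, ENNReal.inv_eq_top, tsub_eq_zero_iff_le]
      exact fun h => absurd (lt_of_le_of_lt h (by exact_mod_cast ENNReal.ofReal_lt_one.mpr hq1))
        (lt_irrefl _)
    · set c : ℕ → ℝ≥0∞ := fun n => ENNReal.ofReal (((1/2:ℝ) ^ (n+1)) ^ γ) with hc
      have hpt : ∀ η, ENNReal.ofReal (dist ξ η ^ γ) ≤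
          ∑' n : ℕ, Set.indicator (Metric.closedBall ξ ((1/2:ℝ)^n)) (fun _ => c n) η := by
        intro η
        rcases eq_or_lt_of_le (dist_nonneg : (0:ℝ) ≤ dist ξ η) with h0 | hpos
        · rw [← h0, Real.zero_rpow hγ0.ne]; simp
        · have hPex : ∃ n : ℕ, (1/2:ℝ)^(n+1) < dist ξ η := by
            obtain ⟨N, hN⟩ := exists_pow_lt_of_lt_one hpos (by norm_num : (1/2:ℝ) < 1)
            exact ⟨N, lt_of_le_of_lt (pow_le_pow_of_le_one (by norm_num) (by norm_num)
              (Nat.le_succ N)) hN⟩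
          set n₀ := Nat.find hPex with hn₀
          have h1 : (1/2:ℝ)^(n₀+1) < dist ξ η := Nat.find_spec hPex
          have h2 : dist ξ η ≤ (1/2:ℝ)^n₀ := by
            match hh : n₀, h1 with
            | 0, _ => simpa using hd1 ξ η
            | (m+1), _ =>
              have := Nat.find_min hPex (by omega : m < n₀)
              push_neg at this
              simpa using this
          calc ENNReal.ofReal (dist ξ η ^ γ)
              ≤ c n₀ := ENNReal.ofReal_le_ofReal
                (Real.rpow_le_rpow_of_nonpos (by positivity) h1.le hγ0.le)
            _ = Set.indicator (Metric.closedBall ξ ((1/2:ℝ)^n₀)) (fun _ => c n₀) η := by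
                rw [Set.indicator_of_mem]
                exact Metric.mem_closedBall.mpr (by rw [dist_comm]; exact h2)
            _ ≤ _ := ENNReal.le_tsum n₀
      calc ∫⁻ η, ENNReal.ofReal (dist ξ η ^ γ) ∂ν
          ≤ ∫⁻ η, ∑' n : ℕ, Set.indicator (Metric.closedBall ξ ((1/2:ℝ)^n)) (fun _ => c n) η ∂ν :=
            lintegral_mono hpt
        _ = ∑' n : ℕ, ∫⁻ η, Set.indicator (Metric.closedBall ξ ((1/2:ℝ)^n)) (fun _ => c n) η ∂ν :=
            lintegral_tsum fun n =>
              (measurable_const.indicator measurableSet_closedBall).aemeasurable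
        _ = ∑' n : ℕ, c n * ν (Metric.closedBall ξ ((1/2:ℝ)^n)) := by
            refine tsum_congr fun n => ?_
            rw [lintegral_indicator_const measurableSet_closedBall]
        _ ≤ ∑' n : ℕ, ENNReal.ofReal ((1/2:ℝ)^γ * C₀) * (ENNReal.ofReal q) ^ n := by
            refine ENNReal.tsum_le_tsum fun n => ?_
            calc c n * ν (Metric.closedBall ξ ((1/2:ℝ)^n))
                ≤ c n * ENNReal.ofReal (C₀ * ((1/2:ℝ)^n) ^ D) :=
                  mul_le_mul_right (hball ξ _ (by positivity)) _
              _ = ENNReal.ofReal ((1/2:ℝ)^γ * C₀) * (ENNReal.ofReal q) ^ n := by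
                  rw [hc, ← ENNReal.ofReal_mul (by positivity), ← ENNReal.ofReal_pow hqpos.le,
                    ← ENNReal.ofReal_mul (by positivity)]
                  congr 1
                  rw [pow_succ, Real.mul_rpow (by positivity) (by norm_num),
                    pow_rpow_comm _ (by norm_num) n γ, pow_rpow_comm _ (by norm_num) n D,
                    hq, Real.rpow_add (by norm_num : (0:ℝ) < 1/2), mul_pow]
                  ring
        _ = ENNReal.ofReal ((1/2:ℝ)^γ * C₀) * (1 - ENNReal.ofReal q)⁻¹ := by
            rw [ENNReal.tsum_mul_left, ENNReal.tsum_geometric]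

lemma ennreal_sq (x : ℝ≥0∞) : x ^ (2:ℝ) = x ^ 2 := by
  rw [← ENNReal.rpow_natCast]; norm_num

lemma holder2 {α : Type*} [MeasurableSpace α] (μ : Measure α) {f g : α → ℝ≥0∞}
    (hf : AEMeasurable f μ) (hg : AEMeasurable g μ) :
    ∫⁻ a, f a * g a ∂μ ≤
      (∫⁻ a, (f a) ^ 2 ∂μ) ^ (1/2:ℝ) * (∫⁻ a, (g a) ^ 2 ∂μ) ^ (1/2:ℝ) := by
  have h2 : (2:ℝ).HolderConjugate 2 := ⟨by norm_num, by norm_num, by norm_num⟩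
  have := ENNReal.lintegral_mul_le_Lp_mul_Lq μ h2 hf hg
  simpa [ennreal_sq] using this

lemma sq_lintegral_lt_top {α : Type*} [MeasurableSpace α] {μ : Measure α} {f : α → ℂ}
    (hf : MemLp f 2 μ) : ∫⁻ a, (‖f a‖₊ : ℝ≥0∞) ^ 2 ∂μ < ⊤ := by
  have h := hf.2
  rw [eLpNorm_eq_lintegral_rpow_enorm_toReal (by norm_num) (by norm_num)] at h
  simp only [ENNReal.toReal_ofNat] at h
  have := (ENNReal.rpow_lt_top_iff_of_pos (by norm_num : (0:ℝ) < 1/2)).mp h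
  simpa [ennreal_sq, enorm_eq_nnnorm] using this

lemma memLp_of_sq {α : Type*} [MeasurableSpace α] {μ : Measure α} {f : α → ℂ}
    (hm : AEStronglyMeasurable f μ) (h : ∫⁻ a, (‖f a‖₊ : ℝ≥0∞) ^ 2 ∂μ < ⊤) : MemLp f 2 μ := by
  refine ⟨hm, ?_⟩
  rw [eLpNorm_eq_lintegral_rpow_enorm_toReal (by norm_num) (by norm_num)]
  simp only [ENNReal.toReal_ofNat]
  apply ENNReal.rpow_lt_top_of_nonneg (by norm_num)
  simpa [ennreal_sq, enorm_eq_nnnorm] using h.ne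

lemma enorm_mul_real (z : ℂ) (r : ℝ) (hr : 0 ≤ r) :
    (‖z * ((r : ℝ) : ℂ)‖₊ : ℝ≥0∞) = (‖z‖₊ : ℝ≥0∞) * ENNReal.ofReal r := by
  rw [nnnorm_mul, ENNReal.coe_mul, Complex.nnnorm_real, ← enorm_eq_nnnorm r, Real.enorm_eq_ofReal hr]

lemma ofReal_rpow_sq (d : ℝ) (hd : 0 ≤ d) (e : ℝ) :
    (ENNReal.ofReal (d ^ e)) ^ 2 = ENNReal.ofReal (d ^ (2 * e)) := by
  rw [← ENNReal.ofReal_pow (Real.rpow_nonneg hd e)]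
  congr 1
  rw [← Real.rpow_natCast (d ^ e) 2, ← Real.rpow_mul hd]
  norm_num; ring_nf

lemma half_sq (x : ℝ≥0∞) : (x ^ (1/2:ℝ)) ^ 2 = x := by
  rw [← ENNReal.rpow_natCast, ← ENNReal.rpow_mul]
  norm_num

theorem derivation_adjoint_aux
    {Ω : Type*} [MetricSpace Ω] [CompactSpace Ω] [MeasurableSpace Ω] [BorelSpace Ω]
    (ν : Measure Ω) [IsProbabilityMeasure ν]
    (D : ℝ) (hD : 0 < D)
    (hdiam : Metric.diam (Set.univ : Set Ω) ≤ 1)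
    (Cν : ℝ) (hCν : 1 ≤ Cν)
    (hAR : ∀ ξ : Ω, ∀ r : ℝ, 0 < r → r ≤ Metric.diam (Set.univ : Set Ω) →
      ENNReal.ofReal (Cν⁻¹ * r ^ D) ≤ ν (Metric.ball ξ r) ∧
        ν (Metric.ball ξ r) ≤ ENNReal.ofReal (Cν * r ^ D))
    (t : ℝ) (ht : 0 < t)
    (v : Ω → ℂ) (hvmeas : Measurable v) (hv : MemLp v 2 ν)
    (F : Ω × Ω → ℂ) (hFmeas : Measurable F) (hF : MemLp F 2 (ν.prod ν)) :
    (∀ᵐ ξ ∂ν, Integrable (fun η =>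
        (F (ξ, η) - F (η, ξ)) * ((dist ξ η ^ (-((1:ℝ)/2 - t) * D) : ℝ) : ℂ)) ν) ∧
    MemLp (fun ξ => ∫ η,
        (F (ξ, η) - F (η, ξ)) * ((dist ξ η ^ (-((1:ℝ)/2 - t) * D) : ℝ) : ℂ) ∂ν) 2 ν ∧
    (∫ p : Ω × Ω, (v p.1 - v p.2) * (starRingEnd ℂ) (F p)
          * ((dist p.1 p.2 ^ (-((1:ℝ)/2 - t) * D) : ℝ) : ℂ) ∂(ν.prod ν))
      = ∫ ξ, v ξ * (starRingEnd ℂ) (∫ η,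
          (F (ξ, η) - F (η, ξ)) * ((dist ξ η ^ (-((1:ℝ)/2 - t) * D) : ℝ) : ℂ) ∂ν) ∂ν := by
  set e : ℝ := -((1:ℝ)/2 - t) * D with he_def
  obtain ⟨M, hMtop, hM⟩ := kernel_bound ν D hD hdiam Cν hCν hAR (2*e)
    (by rw [he_def]; nlinarith)
  -- kernels
  have hrpow : Measurable fun x : ℝ => x ^ e := by measurability
  have hkmeas : Measurable fun p : Ω × Ω => dist p.1 p.2 ^ e := hrpow.comp measurable_dist
  have hkcmeas : Measurable fun p : Ω × Ω => ((dist p.1 p.2 ^ e : ℝ) : ℂ) :=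
    Complex.measurable_ofReal.comp hkmeas
  have hKmeas : Measurable fun p : Ω × Ω => ENNReal.ofReal (dist p.1 p.2 ^ e) :=
    ENNReal.measurable_ofReal.comp hkmeas
  have hknn : ∀ ξ η : Ω, 0 ≤ dist ξ η ^ e := fun ξ η => Real.rpow_nonneg dist_nonneg e
  have hKsq : ∀ ξ : Ω, ∫⁻ η, (ENNReal.ofReal (dist ξ η ^ e)) ^ 2 ∂ν ≤ M := by
    intro ξ
    calc ∫⁻ η, (ENNReal.ofReal (dist ξ η ^ e)) ^ 2 ∂ν
        = ∫⁻ η, ENNReal.ofReal (dist ξ η ^ (2*e)) ∂ν :=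
          lintegral_congr fun η => ofReal_rpow_sq _ dist_nonneg e
      _ ≤ M := hM ξ
  -- F'
  set F' : Ω × Ω → ℂ := fun p => F p - F (p.2, p.1) with hF'_def
  have hF'meas : Measurable F' := hFmeas.sub (hFmeas.comp measurable_swap)
  have hswapMP : MeasurePreserving Prod.swap (ν.prod ν) (ν.prod ν) :=
    Measure.measurePreserving_swap
  have hF'L : MemLp F' 2 (ν.prod ν) := hF.sub (hF.comp_measurePreserving hswapMP)
  have hv2 := sq_lintegral_lt_top hv
  have hF2 := sq_lintegral_lt_top hF
  have hF'2 := sq_lintegral_lt_top hF'L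
  -- A
  set A : Ω → ℝ≥0∞ := fun ξ => ∫⁻ η, (‖F' (ξ, η)‖₊ : ℝ≥0∞) ^ 2 ∂ν with hA_def
  have hA_meas : Measurable A :=
    Measurable.lintegral_prod_right (hF'meas.enorm.pow_const 2)
  have hA_int : ∫⁻ ξ, A ξ ∂ν = ∫⁻ p, (‖F' p‖₊ : ℝ≥0∞) ^ 2 ∂(ν.prod ν) :=
    (lintegral_prod _ (hF'meas.enorm.pow_const 2).aemeasurable).symm
  have hA_fin : ∀ᵐ ξ ∂ν, A ξ < ⊤ := ae_lt_top hA_meas (by rw [hA_int]; exact hF'2.ne)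
  -- C1
  have hC1 : ∀ ξ : Ω, ∫⁻ η, (‖F' (ξ, η)‖₊ : ℝ≥0∞) * ENNReal.ofReal (dist ξ η ^ e) ∂ν
      ≤ (A ξ) ^ (1/2:ℝ) * M ^ (1/2:ℝ) := by
    intro ξ
    refine le_trans (holder2 ν ((hF'meas.comp measurable_prodMk_left).enorm.aemeasurable)
      ((hKmeas.comp measurable_prodMk_left).aemeasurable)) ?_
    exact mul_le_mul' le_rfl (ENNReal.rpow_le_rpow (hKsq ξ) (by norm_num))
  -- C2 and C3
  have hC2 : ∫⁻ p : Ω × Ω, ((‖v p.1‖₊ : ℝ≥0∞) * ENNReal.ofReal (dist p.1 p.2 ^ e)) ^ 2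
      ∂(ν.prod ν) < ⊤ := by
    have hmeas : Measurable fun p : Ω × Ω =>
        ((‖v p.1‖₊ : ℝ≥0∞) * ENNReal.ofReal (dist p.1 p.2 ^ e)) ^ 2 :=
      (((hvmeas.comp measurable_fst).enorm.mul hKmeas).pow_const 2)
    calc ∫⁻ p : Ω × Ω, ((‖v p.1‖₊ : ℝ≥0∞) * ENNReal.ofReal (dist p.1 p.2 ^ e)) ^ 2 ∂(ν.prod ν)
        = ∫⁻ ξ, ∫⁻ η, ((‖v ξ‖₊ : ℝ≥0∞) * ENNReal.ofReal (dist ξ η ^ e)) ^ 2 ∂ν ∂ν :=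
          lintegral_prod _ hmeas.aemeasurable
      _ ≤ ∫⁻ ξ, (‖v ξ‖₊ : ℝ≥0∞) ^ 2 * M ∂ν := by
          refine lintegral_mono fun ξ => ?_
          calc ∫⁻ η, ((‖v ξ‖₊ : ℝ≥0∞) * ENNReal.ofReal (dist ξ η ^ e)) ^ 2 ∂ν
              = ∫⁻ η, (‖v ξ‖₊ : ℝ≥0∞) ^ 2 * (ENNReal.ofReal (dist ξ η ^ e)) ^ 2 ∂ν := by
                simp_rw [mul_pow]
            _ = (‖v ξ‖₊ : ℝ≥0∞) ^ 2 * ∫⁻ η, (ENNReal.ofReal (dist ξ η ^ e)) ^ 2 ∂ν :=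
                lintegral_const_mul _ ((hKmeas.comp measurable_prodMk_left).pow_const 2)
            _ ≤ (‖v ξ‖₊ : ℝ≥0∞) ^ 2 * M := mul_le_mul' le_rfl (hKsq ξ)
      _ = (∫⁻ ξ, (‖v ξ‖₊ : ℝ≥0∞) ^ 2 ∂ν) * M :=
          lintegral_mul_const _ (hvmeas.enorm.pow_const 2)
      _ < ⊤ := ENNReal.mul_lt_top hv2 hMtop.lt_top
  have hC3 : ∫⁻ p : Ω × Ω, ((‖v p.2‖₊ : ℝ≥0∞) * ENNReal.ofReal (dist p.1 p.2 ^ e)) ^ 2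
      ∂(ν.prod ν) < ⊤ := by
    have hmeas : Measurable fun p : Ω × Ω =>
        ((‖v p.2‖₊ : ℝ≥0∞) * ENNReal.ofReal (dist p.1 p.2 ^ e)) ^ 2 :=
      (((hvmeas.comp measurable_snd).enorm.mul hKmeas).pow_const 2)
    calc ∫⁻ p : Ω × Ω, ((‖v p.2‖₊ : ℝ≥0∞) * ENNReal.ofReal (dist p.1 p.2 ^ e)) ^ 2 ∂(ν.prod ν)
        = ∫⁻ η, ∫⁻ ξ, ((‖v η‖₊ : ℝ≥0∞) * ENNReal.ofReal (dist ξ η ^ e)) ^ 2 ∂ν ∂ν :=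
          lintegral_prod_symm _ hmeas.aemeasurable
      _ ≤ ∫⁻ η, (‖v η‖₊ : ℝ≥0∞) ^ 2 * M ∂ν := by
          refine lintegral_mono fun η => ?_
          calc ∫⁻ ξ, ((‖v η‖₊ : ℝ≥0∞) * ENNReal.ofReal (dist ξ η ^ e)) ^ 2 ∂ν
              = ∫⁻ ξ, (‖v η‖₊ : ℝ≥0∞) ^ 2 * (ENNReal.ofReal (dist η ξ ^ e)) ^ 2 ∂ν := by
                refine lintegral_congr fun ξ => ?_
                rw [mul_pow, dist_comm]
            _ = (‖v η‖₊ : ℝ≥0∞) ^ 2 * ∫⁻ ξ, (ENNReal.ofReal (dist η ξ ^ e)) ^ 2 ∂ν :=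
                lintegral_const_mul _ ((hKmeas.comp measurable_prodMk_left).pow_const 2)
            _ ≤ (‖v η‖₊ : ℝ≥0∞) ^ 2 * M := mul_le_mul' le_rfl (hKsq η)
      _ = (∫⁻ η, (‖v η‖₊ : ℝ≥0∞) ^ 2 ∂ν) * M :=
          lintegral_mul_const _ (hvmeas.enorm.pow_const 2)
      _ < ⊤ := ENNReal.mul_lt_top hv2 hMtop.lt_top
  -- generic integrability of φ * conj ψ * kc
  have key_int : ∀ φ ψ : Ω × Ω → ℂ, Measurable φ → Measurable ψ →
      (∫⁻ p : Ω × Ω, ((‖φ p‖₊ : ℝ≥0∞) * ENNReal.ofReal (dist p.1 p.2 ^ e)) ^ 2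
        ∂(ν.prod ν)) < ⊤ →
      (∫⁻ p : Ω × Ω, (‖ψ p‖₊ : ℝ≥0∞) ^ 2 ∂(ν.prod ν)) < ⊤ →
      Integrable (fun p : Ω × Ω =>
        φ p * (starRingEnd ℂ) (ψ p) * ((dist p.1 p.2 ^ e : ℝ) : ℂ)) (ν.prod ν) := by
    intro φ ψ hφ hψ hφ2 hψ2
    refine ⟨((hφ.mul (Complex.continuous_conj.measurable.comp hψ)).mul
      hkcmeas).aestronglyMeasurable, ?_⟩
    rw [hasFiniteIntegral_def]
    have heq : ∀ p : Ω × Ω,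
        (‖φ p * (starRingEnd ℂ) (ψ p) * ((dist p.1 p.2 ^ e : ℝ) : ℂ)‖₊ : ℝ≥0∞)
        = ((‖φ p‖₊ : ℝ≥0∞) * ENNReal.ofReal (dist p.1 p.2 ^ e)) * (‖ψ p‖₊ : ℝ≥0∞) := by
      intro p
      rw [enorm_mul_real _ _ (hknn _ _), nnnorm_mul, ENNReal.coe_mul, starRingEnd_apply,
        nnnorm_star]
      ring
    calc ∫⁻ p, (‖φ p * (starRingEnd ℂ) (ψ p) * ((dist p.1 p.2 ^ e : ℝ) : ℂ)‖₊ : ℝ≥0∞)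
          ∂(ν.prod ν)
        = ∫⁻ p, ((‖φ p‖₊ : ℝ≥0∞) * ENNReal.ofReal (dist p.1 p.2 ^ e)) * (‖ψ p‖₊ : ℝ≥0∞)
          ∂(ν.prod ν) := lintegral_congr heq
      _ ≤ (∫⁻ p : Ω × Ω, ((‖φ p‖₊ : ℝ≥0∞) * ENNReal.ofReal (dist p.1 p.2 ^ e)) ^ 2
            ∂(ν.prod ν)) ^ (1/2:ℝ) *
          (∫⁻ p : Ω × Ω, (‖ψ p‖₊ : ℝ≥0∞) ^ 2 ∂(ν.prod ν)) ^ (1/2:ℝ) :=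
          holder2 _ (hφ.enorm.mul hKmeas).aemeasurable hψ.enorm.aemeasurable
      _ < ⊤ := ENNReal.mul_lt_top
          (ENNReal.rpow_lt_top_of_nonneg (by norm_num) hφ2.ne)
          (ENNReal.rpow_lt_top_of_nonneg (by norm_num) hψ2.ne)
  -- swapped F is square integrable
  have hFswap2 : ∫⁻ p : Ω × Ω, (‖F (p.2, p.1)‖₊ : ℝ≥0∞) ^ 2 ∂(ν.prod ν) < ⊤ := by
    calc ∫⁻ p : Ω × Ω, (‖F (p.2, p.1)‖₊ : ℝ≥0∞) ^ 2 ∂(ν.prod ν)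
        = ∫⁻ q : Ω × Ω, (‖F q‖₊ : ℝ≥0∞) ^ 2 ∂(ν.prod ν) :=
          hswapMP.lintegral_comp (hFmeas.enorm.pow_const 2)
      _ < ⊤ := hF2
  have I1 := key_int (fun p => v p.1) F (hvmeas.comp measurable_fst) hFmeas hC2 hF2
  have I2 := key_int (fun p => v p.2) F (hvmeas.comp measurable_snd) hFmeas hC3 hF2
  have I2' := key_int (fun p => v p.1) (fun p => F (p.2, p.1)) (hvmeas.comp measurable_fst)
    (hFmeas.comp measurable_swap) hC2 hFswap2
  have I4 : Integrable (fun p : Ω × Ω =>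
      v p.1 * (starRingEnd ℂ) (F' p) * ((dist p.1 p.2 ^ e : ℝ) : ℂ)) (ν.prod ν) := by
    refine (I1.sub I2').congr (Filter.Eventually.of_forall fun p => ?_)
    simp only [hF'_def, map_sub, Pi.sub_apply]
    ring
  -- part 1 (with F')
  have hsecint : ∀ᵐ ξ ∂ν, Integrable
      (fun η => F' (ξ, η) * ((dist ξ η ^ e : ℝ) : ℂ)) ν := by
    filter_upwards [hA_fin] with ξ hξ
    refine ⟨((hF'meas.comp measurable_prodMk_left).mul
      (hkcmeas.comp measurable_prodMk_left)).aestronglyMeasurable, ?_⟩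
    rw [hasFiniteIntegral_def]
    calc ∫⁻ η, (‖F' (ξ, η) * ((dist ξ η ^ e : ℝ) : ℂ)‖₊ : ℝ≥0∞) ∂ν
        = ∫⁻ η, (‖F' (ξ, η)‖₊ : ℝ≥0∞) * ENNReal.ofReal (dist ξ η ^ e) ∂ν :=
          lintegral_congr fun η => enorm_mul_real _ _ (hknn ξ η)
      _ ≤ (A ξ) ^ (1/2:ℝ) * M ^ (1/2:ℝ) := hC1 ξ
      _ < ⊤ := ENNReal.mul_lt_top
          (ENNReal.rpow_lt_top_of_nonneg (by norm_num) hξ.ne)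
          (ENNReal.rpow_lt_top_of_nonneg (by norm_num) hMtop)
  -- part 2 (with F')
  have hGL : MemLp (fun ξ => ∫ η, F' (ξ, η) * ((dist ξ η ^ e : ℝ) : ℂ) ∂ν) 2 ν := by
    have hGmeas : StronglyMeasurable
        (fun ξ => ∫ η, F' (ξ, η) * ((dist ξ η ^ e : ℝ) : ℂ) ∂ν) := by
      apply MeasureTheory.StronglyMeasurable.integral_prod_right'
        (f := fun p : Ω × Ω => F' p * ((dist p.1 p.2 ^ e : ℝ) : ℂ))
      exact (hF'meas.mul hkcmeas).stronglyMeasurable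
    refine memLp_of_sq hGmeas.aestronglyMeasurable ?_
    calc ∫⁻ ξ, (‖∫ η, F' (ξ, η) * ((dist ξ η ^ e : ℝ) : ℂ) ∂ν‖₊ : ℝ≥0∞) ^ 2 ∂ν
        ≤ ∫⁻ ξ, A ξ * M ∂ν := by
          refine lintegral_mono fun ξ => ?_
          have h1 : (‖∫ η, F' (ξ, η) * ((dist ξ η ^ e : ℝ) : ℂ) ∂ν‖₊ : ℝ≥0∞)
              ≤ (A ξ) ^ (1/2:ℝ) * M ^ (1/2:ℝ) := by
            refine le_trans (enorm_integral_le_lintegral_enorm _) ?_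
            calc ∫⁻ η, (‖F' (ξ, η) * ((dist ξ η ^ e : ℝ) : ℂ)‖₊ : ℝ≥0∞) ∂ν
                = ∫⁻ η, (‖F' (ξ, η)‖₊ : ℝ≥0∞) * ENNReal.ofReal (dist ξ η ^ e) ∂ν :=
                  lintegral_congr fun η => enorm_mul_real _ _ (hknn ξ η)
              _ ≤ (A ξ) ^ (1/2:ℝ) * M ^ (1/2:ℝ) := hC1 ξ
          calc (‖∫ η, F' (ξ, η) * ((dist ξ η ^ e : ℝ) : ℂ) ∂ν‖₊ : ℝ≥0∞) ^ 2
              ≤ ((A ξ) ^ (1/2:ℝ) * M ^ (1/2:ℝ)) ^ 2 := pow_le_pow_left₀ (zero_le) h1 2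
            _ = A ξ * M := by rw [mul_pow, half_sq, half_sq]
      _ = (∫⁻ ξ, A ξ ∂ν) * M := lintegral_mul_const _ hA_meas
      _ < ⊤ := ENNReal.mul_lt_top (by rw [hA_int]; exact hF'2) hMtop.lt_top
  -- part 3 (with F')
  have hmain : (∫ p : Ω × Ω, (v p.1 - v p.2) * (starRingEnd ℂ) (F p)
        * ((dist p.1 p.2 ^ e : ℝ) : ℂ) ∂(ν.prod ν))
      = ∫ ξ, v ξ * (starRingEnd ℂ)
          (∫ η, F' (ξ, η) * ((dist ξ η ^ e : ℝ) : ℂ) ∂ν) ∂ν := by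
    have stepB : (∫ p : Ω × Ω, v p.2 * (starRingEnd ℂ) (F p)
          * ((dist p.1 p.2 ^ e : ℝ) : ℂ) ∂(ν.prod ν))
        = ∫ p : Ω × Ω, v p.1 * (starRingEnd ℂ) (F (p.2, p.1))
          * ((dist p.1 p.2 ^ e : ℝ) : ℂ) ∂(ν.prod ν) := by
      have hswapint := hswapMP.integral_comp
        (MeasurableEquiv.prodComm : Ω × Ω ≃ᵐ Ω × Ω).measurableEmbedding
        (fun p : Ω × Ω => v p.2 * (starRingEnd ℂ) (F p) * ((dist p.1 p.2 ^ e : ℝ) : ℂ))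
      rw [← hswapint]
      refine integral_congr_ae (Filter.Eventually.of_forall fun p => ?_)
      simp only [Prod.fst_swap, Prod.snd_swap, Prod.swap]
      rw [dist_comm]
    calc (∫ p : Ω × Ω, (v p.1 - v p.2) * (starRingEnd ℂ) (F p)
          * ((dist p.1 p.2 ^ e : ℝ) : ℂ) ∂(ν.prod ν))
        = ∫ p : Ω × Ω, (v p.1 * (starRingEnd ℂ) (F p) * ((dist p.1 p.2 ^ e : ℝ) : ℂ)
            - v p.2 * (starRingEnd ℂ) (F p) * ((dist p.1 p.2 ^ e : ℝ) : ℂ)) ∂(ν.prod ν) := by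
          refine integral_congr_ae (Filter.Eventually.of_forall fun p => ?_); ring
      _ = (∫ p : Ω × Ω, v p.1 * (starRingEnd ℂ) (F p)
            * ((dist p.1 p.2 ^ e : ℝ) : ℂ) ∂(ν.prod ν))
          - ∫ p : Ω × Ω, v p.2 * (starRingEnd ℂ) (F p)
            * ((dist p.1 p.2 ^ e : ℝ) : ℂ) ∂(ν.prod ν) := integral_sub I1 I2
      _ = (∫ p : Ω × Ω, v p.1 * (starRingEnd ℂ) (F p)
            * ((dist p.1 p.2 ^ e : ℝ) : ℂ) ∂(ν.prod ν))
          - ∫ p : Ω × Ω, v p.1 * (starRingEnd ℂ) (F (p.2, p.1))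
            * ((dist p.1 p.2 ^ e : ℝ) : ℂ) ∂(ν.prod ν) := by rw [stepB]
      _ = ∫ p : Ω × Ω, v p.1 * (starRingEnd ℂ) (F' p)
            * ((dist p.1 p.2 ^ e : ℝ) : ℂ) ∂(ν.prod ν) := by
          rw [← integral_sub I1 I2']
          refine integral_congr_ae (Filter.Eventually.of_forall fun p => ?_)
          simp only [hF'_def, map_sub]
          ring
      _ = ∫ ξ, ∫ η, v ξ * (starRingEnd ℂ) (F' (ξ, η))
            * ((dist ξ η ^ e : ℝ) : ℂ) ∂ν ∂ν := integral_prod _ I4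
      _ = ∫ ξ, v ξ * (starRingEnd ℂ)
            (∫ η, F' (ξ, η) * ((dist ξ η ^ e : ℝ) : ℂ) ∂ν) ∂ν := by
          refine integral_congr_ae (Filter.Eventually.of_forall fun ξ => ?_)
          calc ∫ η, v ξ * (starRingEnd ℂ) (F' (ξ, η)) * ((dist ξ η ^ e : ℝ) : ℂ) ∂ν
              = ∫ η, v ξ * (starRingEnd ℂ) (F' (ξ, η) * ((dist ξ η ^ e : ℝ) : ℂ)) ∂ν := by
                refine integral_congr_ae (Filter.Eventually.of_forall fun η => ?_)
                simp only [map_mul, Complex.conj_ofReal]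
                ring
            _ = v ξ * ∫ η, (starRingEnd ℂ) (F' (ξ, η) * ((dist ξ η ^ e : ℝ) : ℂ)) ∂ν :=
                integral_const_mul _ _
            _ = v ξ * (starRingEnd ℂ)
                (∫ η, F' (ξ, η) * ((dist ξ η ^ e : ℝ) : ℂ) ∂ν) := by rw [integral_conj]
  refine ⟨?_, ?_, ?_⟩
  · filter_upwards [hsecint] with ξ h
    simpa only [hF'_def] using h
  · have := hGL
    simpa only [hF'_def] using this
  · have := hmain
    simpa only [hF'_def] using this


/-- Adjoint identity for the derivation `δ_t`: for `v ∈ L²(Ω,ν)` and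
`F ∈ L²(Ω×Ω, ν⊗ν)`, the function `G(ξ) = ∫ (F(ξ,η)-F(η,ξ)) d(ξ,η)^{-(1/2-t)D} dν(η)`
is defined a.e., lies in `L²(Ω,ν)`, and `⟨δ_t v, F⟩ = ⟨v, G⟩`. -/
theorem derivation_adjoint
    {Ω : Type*} [MetricSpace Ω] [CompactSpace Ω] [MeasurableSpace Ω] [BorelSpace Ω]
    (ν : Measure Ω) [IsProbabilityMeasure ν]
    (D : ℝ) (hD : 0 < D)
    (hdiam : Metric.diam (Set.univ : Set Ω) ≤ 1)
    (Cν : ℝ) (hCν : 1 ≤ Cν)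
    (hAR : ∀ ξ : Ω, ∀ r : ℝ, 0 < r → r ≤ Metric.diam (Set.univ : Set Ω) →
      ENNReal.ofReal (Cν⁻¹ * r ^ D) ≤ ν (Metric.ball ξ r) ∧
        ν (Metric.ball ξ r) ≤ ENNReal.ofReal (Cν * r ^ D))
    (t : ℝ) (ht : 0 < t)
    (v : Ω → ℂ) (hv : MemLp v 2 ν)
    (F : Ω × Ω → ℂ) (hF : MemLp F 2 (ν.prod ν)) :
    (∀ᵐ ξ ∂ν, Integrable (fun η =>
        (F (ξ, η) - F (η, ξ)) * ((dist ξ η ^ (-((1:ℝ)/2 - t) * D) : ℝ) : ℂ)) ν) ∧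
    MemLp (fun ξ => ∫ η,
        (F (ξ, η) - F (η, ξ)) * ((dist ξ η ^ (-((1:ℝ)/2 - t) * D) : ℝ) : ℂ) ∂ν) 2 ν ∧
    (∫ p : Ω × Ω, (v p.1 - v p.2) * (starRingEnd ℂ) (F p)
          * ((dist p.1 p.2 ^ (-((1:ℝ)/2 - t) * D) : ℝ) : ℂ) ∂(ν.prod ν))
      = ∫ ξ, v ξ * (starRingEnd ℂ) (∫ η,
          (F (ξ, η) - F (η, ξ)) * ((dist ξ η ^ (-((1:ℝ)/2 - t) * D) : ℝ) : ℂ) ∂ν) ∂ν := by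
  set e : ℝ := -((1:ℝ)/2 - t) * D with he_def
  set vm : Ω → ℂ := hv.1.mk v with hvm_def
  set Fm : Ω × Ω → ℂ := hF.1.mk F with hFm_def
  have hvv : v =ᵐ[ν] vm := hv.1.ae_eq_mk
  have hFF : F =ᵐ[ν.prod ν] Fm := hF.1.ae_eq_mk
  have hvmL : MemLp vm 2 ν := hv.ae_eq hvv
  have hFmL : MemLp Fm 2 (ν.prod ν) := hF.ae_eq hFF
  have haux := derivation_adjoint_aux ν D hD hdiam Cν hCν hAR t ht
    vm hv.1.stronglyMeasurable_mk.measurable hvmL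
    Fm hF.1.stronglyMeasurable_mk.measurable hFmL
  have hFFswap : (fun p : Ω × Ω => F (p.2, p.1)) =ᵐ[ν.prod ν]
      fun p : Ω × Ω => Fm (p.2, p.1) :=
    (Measure.measurePreserving_swap (μ := ν) (ν := ν)).quasiMeasurePreserving.ae_eq_comp hFF
  have h1 : ∀ᵐ ξ ∂ν, ∀ᵐ η ∂ν, F (ξ, η) = Fm (ξ, η) := Measure.ae_ae_of_ae_prod hFF
  have h2 : ∀ᵐ ξ ∂ν, ∀ᵐ η ∂ν, F (η, ξ) = Fm (η, ξ) := Measure.ae_ae_of_ae_prod hFFswap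
  have hsec : ∀ᵐ ξ ∂ν, (fun η => (F (ξ, η) - F (η, ξ)) * ((dist ξ η ^ e : ℝ) : ℂ))
      =ᵐ[ν] (fun η => (Fm (ξ, η) - Fm (η, ξ)) * ((dist ξ η ^ e : ℝ) : ℂ)) := by
    filter_upwards [h1, h2] with ξ e1 e2
    filter_upwards [e1, e2] with η q1 q2
    rw [q1, q2]
  have hGeq : (fun ξ => ∫ η, (F (ξ, η) - F (η, ξ)) * ((dist ξ η ^ e : ℝ) : ℂ) ∂ν)
      =ᵐ[ν] (fun ξ => ∫ η, (Fm (ξ, η) - Fm (η, ξ)) * ((dist ξ η ^ e : ℝ) : ℂ) ∂ν) := by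
    filter_upwards [hsec] with ξ hs
    exact integral_congr_ae hs
  refine ⟨?_, ?_, ?_⟩
  · filter_upwards [haux.1, hsec] with ξ h hs
    exact h.congr hs.symm
  · exact (haux.2.1).ae_eq hGeq.symm
  · have hv1 : ∀ᵐ p ∂(ν.prod ν), v p.1 = vm p.1 :=
      Measure.quasiMeasurePreserving_fst.ae_eq_comp hvv
    have hv2 : ∀ᵐ p ∂(ν.prod ν), v p.2 = vm p.2 :=
      Measure.quasiMeasurePreserving_snd.ae_eq_comp hvv
    calc (∫ p : Ω × Ω, (v p.1 - v p.2) * (starRingEnd ℂ) (F p)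
          * ((dist p.1 p.2 ^ e : ℝ) : ℂ) ∂(ν.prod ν))
        = ∫ p : Ω × Ω, (vm p.1 - vm p.2) * (starRingEnd ℂ) (Fm p)
          * ((dist p.1 p.2 ^ e : ℝ) : ℂ) ∂(ν.prod ν) := by
          refine integral_congr_ae ?_
          filter_upwards [hv1, hv2, hFF] with p a b c
          rw [a, b, c]
      _ = ∫ ξ, vm ξ * (starRingEnd ℂ) (∫ η,
            (Fm (ξ, η) - Fm (η, ξ)) * ((dist ξ η ^ e : ℝ) : ℂ) ∂ν) ∂ν := haux.2.2
      _ = ∫ ξ, v ξ * (starRingEnd ℂ) (∫ η,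
            (F (ξ, η) - F (η, ξ)) * ((dist ξ η ^ e : ℝ) : ℂ) ∂ν) ∂ν := by
          refine (integral_congr_ae ?_).symm
          filter_upwards [hvv, hGeq] with ξ a b
          rw [a, b]
end

section
/- Let t > 0. If v ∈ L²(Ω, ν) satisfies I_t v(ξ) = σ_t(ξ) · v(ξ) for ν-almost every ξ (equivalently, v is a fixed vector of the Riesz operator R_t = M_{σ_t⁻¹} I_t), then v is ν-almost everywhere equal to a constant. -/
open MeasureTheory Metric
open scoped ENNReal

section RieszAux

variable {Ω : Type*} [MetricSpace Ω] [CompactSpace Ω] [MeasurableSpace Ω] [BorelSpace Ω]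

/-- Uniform upper ball bound extending the Ahlfors regularity bound to all radii. -/
lemma riesz_ball_bound (ν : Measure Ω) [IsProbabilityMeasure ν]
    (D : ℝ) (hD : 0 < D) (Cν : ℝ) (hCν : 1 ≤ Cν)
    (hdpos : 0 < Metric.diam (Set.univ : Set Ω))
    (hAR : ∀ ξ : Ω, ∀ r : ℝ, 0 < r → r ≤ Metric.diam (Set.univ : Set Ω) →
        ν (Metric.ball ξ r) ≤ ENNReal.ofReal (Cν * r ^ D)) :
    ∃ C : ℝ, 0 < C ∧ ∀ ξ : Ω, ∀ r : ℝ, 0 < r →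
      ν (Metric.ball ξ r) ≤ ENNReal.ofReal (C * r ^ D) := by
  set d := Metric.diam (Set.univ : Set Ω) with hd
  have hCν0 : 0 < Cν := lt_of_lt_of_le one_pos hCν
  have hcov : (Set.univ : Set Ω) ⊆ ⋃ x : Ω, Metric.ball x (d / 2) := by
    intro x _
    exact Set.mem_iUnion.mpr ⟨x, mem_ball_self (by positivity)⟩
  obtain ⟨s, hs⟩ := isCompact_univ.elim_finite_subcover
    (fun x : Ω => Metric.ball x (d / 2)) (fun x => isOpen_ball) hcov
  have hball : ∀ x : Ω, ν (Metric.ball x (d / 2)) ≤ ENNReal.ofReal (Cν * (d / 2) ^ D) :=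
    fun x => hAR x (d / 2) (by positivity) (by linarith)
  have hone : (1 : ℝ≥0∞) ≤ ENNReal.ofReal ((s.card : ℝ) * (Cν * (d / 2) ^ D)) := by
    calc (1 : ℝ≥0∞) = ν Set.univ := (measure_univ).symm
      _ ≤ ν (⋃ x ∈ s, Metric.ball x (d / 2)) := measure_mono hs
      _ ≤ ∑ x ∈ s, ν (Metric.ball x (d / 2)) := measure_biUnion_finset_le s _
      _ ≤ ∑ _x ∈ s, ENNReal.ofReal (Cν * (d / 2) ^ D) := Finset.sum_le_sum fun x _ => hball x
      _ = (s.card : ℝ≥0∞) * ENNReal.ofReal (Cν * (d / 2) ^ D) := by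
          rw [Finset.sum_const, nsmul_eq_mul]
      _ = ENNReal.ofReal ((s.card : ℝ) * (Cν * (d / 2) ^ D)) := by
          rw [← ENNReal.ofReal_natCast s.card, ← ENNReal.ofReal_mul (by positivity)]
  set B : ℝ := (s.card : ℝ) * (Cν * (d / 2) ^ D) with hB
  have hB1 : (1 : ℝ) ≤ B := ENNReal.one_le_ofReal.mp hone
  have hdD : (0 : ℝ) < d ^ D := Real.rpow_pos_of_pos hdpos D
  refine ⟨Cν + B / d ^ D, by positivity, fun ξ r hr => ?_⟩
  rcases le_or_gt r d with hrd | hrd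
  · calc ν (Metric.ball ξ r) ≤ ENNReal.ofReal (Cν * r ^ D) := hAR ξ r hr hrd
      _ ≤ ENNReal.ofReal ((Cν + B / d ^ D) * r ^ D) := by
          apply ENNReal.ofReal_le_ofReal
          have h5 : (0:ℝ) ≤ r ^ D := (Real.rpow_pos_of_pos hr D).le
          nlinarith [div_nonneg (le_trans zero_le_one hB1) hdD.le]
  · have hrD : d ^ D ≤ r ^ D := Real.rpow_le_rpow hdpos.le hrd.le hD.le
    calc ν (Metric.ball ξ r) ≤ 1 := prob_le_one
      _ ≤ ENNReal.ofReal ((Cν + B / d ^ D) * r ^ D) := by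
          rw [ENNReal.one_le_ofReal]
          have h2 : B = B / d ^ D * d ^ D := by field_simp
          have h3 : B / d ^ D * d ^ D ≤ B / d ^ D * r ^ D :=
            mul_le_mul_of_nonneg_left hrD (div_nonneg (le_trans zero_le_one hB1) hdD.le)
          have h4 : B / d ^ D * r ^ D ≤ (Cν + B / d ^ D) * r ^ D := by
            have h5 : (0:ℝ) ≤ r ^ D := (Real.rpow_pos_of_pos hr D).le
            nlinarith
          linarith

/-- No atoms. -/
lemma riesz_no_atoms (ν : Measure Ω) (D : ℝ) (hD : 0 < D) (C : ℝ) (hC : 0 < C)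
    (hball : ∀ ξ : Ω, ∀ r : ℝ, 0 < r →
      ν (Metric.ball ξ r) ≤ ENNReal.ofReal (C * r ^ D)) :
    ∀ ξ : Ω, ν {ξ} = 0 := by
  intro ξ
  refine le_antisymm ?_ zero_le
  have h0 : Filter.Tendsto (fun r : ℝ => C * r ^ D) (nhdsWithin 0 (Set.Ioi 0)) (nhds 0) := by
    have hca : ContinuousAt (fun r : ℝ => C * r ^ D) 0 :=
      continuousAt_const.mul (Real.continuousAt_rpow_const 0 D (Or.inr hD.le))
    have := hca.tendsto
    rw [Real.zero_rpow hD.ne', mul_zero] at this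
    exact this.mono_left nhdsWithin_le_nhds
  have htend : Filter.Tendsto (fun r : ℝ => ENNReal.ofReal (C * r ^ D))
      (nhdsWithin 0 (Set.Ioi 0)) (nhds 0) := by
    have := ENNReal.tendsto_ofReal h0
    simpa using this
  refine ge_of_tendsto htend ?_
  filter_upwards [self_mem_nhdsWithin] with r hr
  refine le_trans (measure_mono ?_) (hball ξ r hr)
  intro x hx
  rw [Set.mem_singleton_iff] at hx
  subst hx
  exact mem_ball_self hr

/-- Uniform bound for the Riesz potential `σ`. -/
lemma riesz_sigma_bound (ν : Measure Ω) [IsProbabilityMeasure ν]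
    (hdiam : Metric.diam (Set.univ : Set Ω) ≤ 1)
    (D : ℝ) (hD : 0 < D) (C : ℝ) (hC : 0 < C)
    (hball : ∀ ξ : Ω, ∀ r : ℝ, 0 < r →
      ν (Metric.ball ξ r) ≤ ENNReal.ofReal (C * r ^ D))
    (α : ℝ) (hα : 0 < D + α) :
    ∃ C' : ℝ≥0∞, C' ≠ ∞ ∧ ∀ ξ : Ω,
      (∫⁻ η, ENNReal.ofReal (dist ξ η ^ α) ∂ν) ≤ C' := by
  have hdle : ∀ ξ η : Ω, dist ξ η ≤ 1 := fun ξ η =>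
    le_trans (dist_le_diam_of_mem isCompact_univ.isBounded trivial trivial) hdiam
  rcases le_or_gt 0 α with hα0 | hα0
  · -- bounded kernel
    refine ⟨1, ENNReal.one_ne_top, fun ξ => ?_⟩
    calc (∫⁻ η, ENNReal.ofReal (dist ξ η ^ α) ∂ν) ≤ ∫⁻ _η, 1 ∂ν := by
          refine lintegral_mono fun η => ?_
          rw [show (1 : ℝ≥0∞) = ENNReal.ofReal 1 by simp]
          exact ENNReal.ofReal_le_ofReal (Real.rpow_le_one dist_nonneg (hdle ξ η) hα0)
      _ = 1 := by simp
  · -- singular kernel, use annuli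
    have hnoatom := riesz_no_atoms ν D hD C hC hball
    set u : ℝ := (1:ℝ)/2 with hu
    have hu0 : (0:ℝ) < u := by norm_num
    have hu1 : u < 1 := by norm_num
    set ρ : ℝ := u ^ (D + α) with hρ
    have hρ0 : 0 < ρ := Real.rpow_pos_of_pos hu0 _
    have hρ1 : ρ < 1 := Real.rpow_lt_one hu0.le hu1 hα
    set M : ℝ := C * 2 ^ (D : ℝ) * u ^ α with hM
    have hM0 : 0 < M := by
      have := Real.rpow_pos_of_pos (show (0:ℝ) < 2 by norm_num) D
      have := Real.rpow_pos_of_pos hu0 α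
      positivity
    refine ⟨ENNReal.ofReal M * (1 - ENNReal.ofReal ρ)⁻¹, ?_, fun ξ => ?_⟩
    · refine ENNReal.mul_ne_top ENNReal.ofReal_ne_top ?_
      rw [Ne, ENNReal.inv_eq_top, tsub_eq_zero_iff_le]
      exact fun h => absurd (lt_of_le_of_lt h (ENNReal.ofReal_lt_one.mpr hρ1)) (lt_irrefl _)
    · set f : Ω → ℝ≥0∞ := fun η => ENNReal.ofReal (dist ξ η ^ α) with hf
      set A : ℕ → Set Ω := fun k => {η | dist ξ η ∈ Set.Ioc (u ^ (k+1)) (u ^ k)} with hA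
      have hdistm : Measurable fun η : Ω => dist ξ η := (continuous_const.dist continuous_id).measurable
      have hAm : ∀ k, MeasurableSet (A k) := fun k => hdistm measurableSet_Ioc
      have hAdisj : Pairwise (Function.onFun Disjoint A) := by
        intro i j hij
        wlog h : i < j generalizing i j
        · exact (this hij.symm (by omega)).symm
        refine Set.disjoint_left.mpr fun η h1 h2 => ?_
        have h3 : u ^ j ≤ u ^ (i + 1) := pow_le_pow_of_le_one hu0.le hu1.le (by omega)
        exact absurd (lt_of_le_of_lt (h2.2.trans h3) h1.1) (lt_irrefl _)
      have hsub : ({ξ}ᶜ : Set Ω) ⊆ ⋃ k, A k := by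
        intro η hη
        have hd0 : 0 < dist ξ η := dist_pos.mpr (fun h => hη (by simp [h.symm]))
        obtain ⟨n, hn⟩ := exists_pow_lt_of_lt_one hd0 hu1
        have hn0 : n ≠ 0 := by
          intro h; rw [h, pow_zero] at hn; exact absurd (lt_of_le_of_lt (hdle ξ η) hn) (lt_irrefl _)
        set m := Nat.find (⟨n, hn⟩ : ∃ n, u ^ n < dist ξ η) with hm
        have hm1 : u ^ m < dist ξ η := Nat.find_spec (⟨n, hn⟩ : ∃ n, u ^ n < dist ξ η)
        have hm0 : m ≠ 0 := by
          intro h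
          rw [h, pow_zero] at hm1
          exact absurd (lt_of_le_of_lt (hdle ξ η) hm1) (lt_irrefl _)
        refine Set.mem_iUnion.mpr ⟨m - 1, ?_, ?_⟩
        · rw [show m - 1 + 1 = m from Nat.succ_pred_eq_of_pos (Nat.pos_of_ne_zero hm0)]
          exact hm1
        · by_contra h
          push_neg at h
          exact Nat.find_min (⟨n, hn⟩ : ∃ n, u ^ n < dist ξ η)
            (Nat.pred_lt hm0) h
      -- real computation per annulus
      have comb : ∀ a b : ℝ, u ^ a * u ^ b = u ^ (a + b) := fun a b =>
        (Real.rpow_add hu0 a b).symm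
      have key : ∀ k : ℕ, ((u ^ (k+1) : ℝ)) ^ α * (C * (2 * u ^ k) ^ D) = M * ρ ^ k := by
        intro k
        have e1 : ((u ^ (k+1) : ℝ)) ^ α = u ^ (((k:ℝ) + 1) * α) := by
          rw [← Real.rpow_natCast u (k+1), ← Real.rpow_mul hu0.le]
          push_cast
          ring_nf
        have e2 : ((2 * u ^ k : ℝ)) ^ D = 2 ^ (D:ℝ) * u ^ ((k:ℝ) * D) := by
          rw [Real.mul_rpow (by norm_num) (by positivity), ← Real.rpow_natCast u k,
            ← Real.rpow_mul hu0.le]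
        have e3 : ρ ^ k = u ^ ((k:ℝ) * (D + α)) := by
          rw [hρ, ← Real.rpow_natCast (u ^ (D+α)) k, ← Real.rpow_mul hu0.le, mul_comm (D+α)]
        rw [e1, e2, e3, hM]
        calc u ^ (((k:ℝ) + 1) * α) * (C * (2 ^ (D:ℝ) * u ^ ((k:ℝ) * D)))
            = C * 2 ^ (D:ℝ) * (u ^ (((k:ℝ) + 1) * α) * u ^ ((k:ℝ) * D)) := by ring
          _ = C * 2 ^ (D:ℝ) * u ^ ((((k:ℝ) + 1) * α) + (k:ℝ) * D) := by rw [comb]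
          _ = C * 2 ^ (D:ℝ) * u ^ (α + (k:ℝ) * (D + α)) := by
              rw [show (((k:ℝ) + 1) * α) + (k:ℝ) * D = α + (k:ℝ) * (D + α) by ring]
          _ = C * 2 ^ (D:ℝ) * (u ^ α * u ^ ((k:ℝ) * (D + α))) := by rw [comb]
          _ = C * 2 ^ (D:ℝ) * u ^ α * u ^ ((k:ℝ) * (D + α)) := by ring
      have hterm : ∀ k : ℕ, (∫⁻ η in A k, f η ∂ν) ≤ ENNReal.ofReal (M * ρ ^ k) := by
        intro k
        have hc : ∀ η ∈ A k, f η ≤ ENNReal.ofReal ((u ^ (k+1) : ℝ) ^ α) := fun η hη =>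
          ENNReal.ofReal_le_ofReal
            (Real.rpow_le_rpow_of_nonpos (pow_pos hu0 _) hη.1.le hα0.le)
        have h1 : (∫⁻ η in A k, f η ∂ν) ≤ ENNReal.ofReal ((u ^ (k+1) : ℝ) ^ α) * ν (A k) := by
          calc (∫⁻ η in A k, f η ∂ν) ≤ ∫⁻ _η in A k, ENNReal.ofReal ((u ^ (k+1) : ℝ) ^ α) ∂ν :=
                setLIntegral_mono' (hAm k) hc
            _ = ENNReal.ofReal ((u ^ (k+1) : ℝ) ^ α) * ν (A k) := setLIntegral_const _ _
        have h2 : ν (A k) ≤ ENNReal.ofReal (C * (2 * u ^ k) ^ D) := by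
          refine le_trans (measure_mono ?_) (hball ξ (2 * u ^ k) (by positivity))
          intro η hη
          have : dist ξ η ≤ u ^ k := hη.2
          have h4 : u ^ k < 2 * u ^ k := by nlinarith [pow_pos hu0 k]
          exact mem_ball'.mpr (lt_of_le_of_lt this h4)
        calc (∫⁻ η in A k, f η ∂ν)
            ≤ ENNReal.ofReal ((u ^ (k+1) : ℝ) ^ α) * ENNReal.ofReal (C * (2 * u ^ k) ^ D) :=
              le_trans h1 (mul_le_mul_right h2 _)
          _ = ENNReal.ofReal ((u ^ (k+1) : ℝ) ^ α * (C * (2 * u ^ k) ^ D)) :=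
              (ENNReal.ofReal_mul (Real.rpow_nonneg (by positivity) _)).symm
          _ = ENNReal.ofReal (M * ρ ^ k) := by rw [key k]
      calc (∫⁻ η, f η ∂ν)
          = (∫⁻ η in {ξ}, f η ∂ν) + ∫⁻ η in ({ξ}ᶜ : Set Ω), f η ∂ν :=
            (lintegral_add_compl f (measurableSet_singleton ξ)).symm
        _ = ∫⁻ η in ({ξ}ᶜ : Set Ω), f η ∂ν := by
            rw [setLIntegral_measure_zero _ _ (hnoatom ξ), zero_add]
        _ ≤ ∫⁻ η in ⋃ k, A k, f η ∂ν := lintegral_mono_set hsub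
        _ = ∑' k, ∫⁻ η in A k, f η ∂ν := lintegral_iUnion hAm hAdisj f
        _ ≤ ∑' k : ℕ, ENNReal.ofReal (M * ρ ^ k) := ENNReal.tsum_le_tsum hterm
        _ = ∑' k : ℕ, ENNReal.ofReal M * ENNReal.ofReal ρ ^ k := by
            congr 1
            funext k
            rw [ENNReal.ofReal_mul hM0.le, ENNReal.ofReal_pow hρ0.le]
        _ = ENNReal.ofReal M * (1 - ENNReal.ofReal ρ)⁻¹ := by
            rw [ENNReal.tsum_mul_left, ENNReal.tsum_geometric]

end RieszAux

set_option maxHeartbeats 1000000 in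
/-- Fixed vectors of the Riesz operator are constant: if `v ∈ L²(Ω,ν)` satisfies
`I_t v(ξ) = σ_t(ξ) v(ξ)` ν-a.e., then `v` is a.e. equal to a constant. -/
theorem riesz_fixed_vector_constant
    {Ω : Type*} [MetricSpace Ω] [CompactSpace Ω] [MeasurableSpace Ω] [BorelSpace Ω]
    (ν : Measure Ω) [IsProbabilityMeasure ν]
    (D : ℝ) (hD : 0 < D)
    (hdiam : Metric.diam (Set.univ : Set Ω) ≤ 1)
    (Cν : ℝ) (hCν : 1 ≤ Cν)
    (hAR : ∀ ξ : Ω, ∀ r : ℝ, 0 < r → r ≤ Metric.diam (Set.univ : Set Ω) →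
      ENNReal.ofReal (Cν⁻¹ * r ^ D) ≤ ν (Metric.ball ξ r) ∧
        ν (Metric.ball ξ r) ≤ ENNReal.ofReal (Cν * r ^ D))
    (t : ℝ) (ht : 0 < t)
    (v : Ω → ℂ) (hv : MemLp v 2 ν)
    (heq : ∀ᵐ ξ ∂ν,
      (∫ η, ((dist ξ η ^ (-(1 - 2*t) * D) : ℝ) : ℂ) * v η ∂ν)
        = ((∫ η, dist ξ η ^ (-(1 - 2*t) * D) ∂ν : ℝ) : ℂ) * v ξ) :
    ∃ c : ℂ, v =ᵐ[ν] fun _ => c := by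
  classical
  have hne : Nonempty Ω := by
    by_contra h
    rw [not_nonempty_iff] at h
    have h1 : ν Set.univ = 1 := measure_univ
    rw [Set.univ_eq_empty_iff.mpr h, measure_empty] at h1
    exact zero_ne_one h1
  by_cases hsing : ∀ x y : Ω, x = y
  · obtain ⟨ξ₀⟩ := hne
    exact ⟨v ξ₀, Filter.Eventually.of_forall fun ξ => by rw [hsing ξ ξ₀]⟩
  push_neg at hsing
  obtain ⟨x₀, y₀, hxy⟩ := hsing
  have hdpos : 0 < Metric.diam (Set.univ : Set Ω) :=
    lt_of_lt_of_le (dist_pos.mpr hxy)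
      (dist_le_diam_of_mem isCompact_univ.isBounded trivial trivial)
  obtain ⟨C, hC0, hball⟩ :=
    riesz_ball_bound ν D hD Cν hCν hdpos (fun ξ r h1 h2 => (hAR ξ r h1 h2).2)
  have hnoatom := riesz_no_atoms ν D hD C hC0 hball
  set α : ℝ := -(1 - 2*t) * D with hαdef
  have hDα : 0 < D + α := by rw [hαdef]; nlinarith
  obtain ⟨C', hC'top, hσ'⟩ := riesz_sigma_bound ν hdiam D hD C hC0 hball α hDα
  set k : Ω → Ω → ℝ := fun ξ η => dist ξ η ^ α with hkdef
  set σ : Ω → ℝ := fun ξ => ∫ η, k ξ η ∂ν with hσdef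
  have hk0 : ∀ ξ η, 0 ≤ k ξ η := fun ξ η => Real.rpow_nonneg dist_nonneg α
  have hksymm : ∀ ξ η, k ξ η = k η ξ := fun ξ η => by
    simp only [hkdef, dist_comm]
  have hkm2 : Measurable fun p : Ω × Ω => k p.1 p.2 := measurable_dist.pow_const α
  have hkm : ∀ ξ, Measurable (k ξ) := fun ξ =>
    ((continuous_const.dist continuous_id).measurable).pow_const α
  have hkint : ∀ ξ, Integrable (k ξ) ν := by
    intro ξ
    refine ⟨(hkm ξ).aestronglyMeasurable, ?_⟩
    rw [hasFiniteIntegral_iff_ofReal (Filter.Eventually.of_forall (hk0 ξ))]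
    exact lt_of_le_of_lt (hσ' ξ) (lt_top_iff_ne_top.mpr hC'top)
  -- measurable representative
  obtain ⟨w, hw, hvw⟩ : ∃ w : Ω → ℂ, StronglyMeasurable w ∧ v =ᵐ[ν] w :=
    ⟨hv.1.mk v, hv.1.stronglyMeasurable_mk, hv.1.ae_eq_mk⟩
  have hw2 : MemLp w 2 ν := hv.ae_eq hvw
  have hwm : Measurable w := hw.measurable
  have hw2int : Integrable (fun ξ => ‖w ξ‖ ^ 2) ν := by
    have h := hw2.integrable_norm_rpow (by norm_num) (by norm_num)
    have h2 : ((2 : ℝ≥0∞).toReal) = (2 : ℝ) := by norm_num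
    rw [h2] at h
    refine h.congr (Filter.Eventually.of_forall fun ξ => ?_)
    have h3 : ‖w ξ‖ ^ (2:ℝ) = ‖w ξ‖ ^ (2:ℕ) := by
      rw [show ((2:ℝ) = ((2:ℕ):ℝ)) by norm_num, Real.rpow_natCast]
    simpa using h3
  have heqw : ∀ᵐ ξ ∂ν, (∫ η, ((k ξ η : ℝ) : ℂ) * w η ∂ν) = ((σ ξ : ℝ) : ℂ) * w ξ := by
    have hint : ∀ ξ, (∫ η, ((k ξ η : ℝ) : ℂ) * v η ∂ν) = ∫ η, ((k ξ η : ℝ) : ℂ) * w η ∂ν :=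
      fun ξ => integral_congr_ae (hvw.mono fun η hη => by dsimp only; rw [hη])
    filter_upwards [heq, hvw] with ξ h1 h2
    rw [← hint ξ]
    show (∫ η, ((dist ξ η ^ α : ℝ) : ℂ) * v η ∂ν) = ((∫ η, dist ξ η ^ α ∂ν : ℝ) : ℂ) * w ξ
    rw [h1, h2]
  -- the product measure
  set P : Measure (Ω × Ω) := ν.prod ν with hPdef
  set g1 : Ω × Ω → ℝ := fun p => k p.1 p.2 * ‖w p.1‖ ^ 2 with hg1def
  set g2 : Ω × Ω → ℝ := fun p => k p.1 p.2 * ‖w p.2‖ ^ 2 with hg2def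
  set g3 : Ω × Ω → ℝ := fun p => k p.1 p.2 * (2 * ((starRingEnd ℂ) (w p.1) * w p.2).re)
    with hg3def
  set G : Ω × Ω → ℝ := fun p => k p.1 p.2 * ‖w p.1 - w p.2‖ ^ 2 with hGdef
  have hg1m : Measurable g1 := hkm2.mul (((hwm.comp measurable_fst).norm).pow_const 2)
  have hg2m : Measurable g2 := hkm2.mul (((hwm.comp measurable_snd).norm).pow_const 2)
  have hconj : Measurable fun z : ℂ => (starRingEnd ℂ) z := continuous_star.measurable
  have hg3m : Measurable g3 := by
    refine hkm2.mul (measurable_const.mul (Complex.measurable_re.comp ?_))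
    exact ((hconj.comp (hwm.comp measurable_fst)).mul (hwm.comp measurable_snd))
  have hGm : Measurable G :=
    hkm2.mul ((((hwm.comp measurable_fst).sub (hwm.comp measurable_snd)).norm).pow_const 2)
  have hz : ∀ z : ℂ, ‖z‖ ^ 2 = z.re * z.re + z.im * z.im := fun z => by
    rw [Complex.sq_norm, Complex.normSq_apply]
  have hGsplit : ∀ p : Ω × Ω, G p = g1 p + g2 p - g3 p := by
    intro p
    simp only [hGdef, hg1def, hg2def, hg3def]
    rw [hz, hz, hz]
    simp only [Complex.sub_re, Complex.sub_im, Complex.mul_re, Complex.mul_im,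
      Complex.conj_re, Complex.conj_im]
    ring
  -- lintegral bounds on the product
  have IhwT : (∫⁻ ξ, ENNReal.ofReal (‖w ξ‖ ^ 2) ∂ν) < ⊤ := by
    rw [← hasFiniteIntegral_iff_ofReal (Filter.Eventually.of_forall fun ξ => by positivity)]
    exact hw2int.2
  have hprod1 : ∀ c : Ω → ℝ, Measurable c → (∀ ξ, 0 ≤ c ξ) →
      (∫⁻ p, ENNReal.ofReal (k p.1 p.2 * c p.1) ∂P) ≤ C' * ∫⁻ ξ, ENNReal.ofReal (c ξ) ∂ν := by
    intro c hcm hc0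
    have h0 : Measurable fun p : Ω × Ω => k p.1 p.2 * c p.1 := hkm2.mul (hcm.comp measurable_fst)
    rw [hPdef, lintegral_prod (fun p => ENNReal.ofReal (k p.1 p.2 * c p.1))
      h0.ennreal_ofReal.aemeasurable]
    calc (∫⁻ ξ, ∫⁻ η, ENNReal.ofReal (k ξ η * c ξ) ∂ν ∂ν)
        = ∫⁻ ξ, ENNReal.ofReal (c ξ) * ∫⁻ η, ENNReal.ofReal (k ξ η) ∂ν ∂ν := by
          refine lintegral_congr fun ξ => ?_
          rw [← lintegral_const_mul _ (hkm ξ).ennreal_ofReal]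
          refine lintegral_congr fun η => ?_
          rw [← ENNReal.ofReal_mul (hc0 ξ), mul_comm (c ξ)]
      _ ≤ ∫⁻ ξ, ENNReal.ofReal (c ξ) * C' ∂ν :=
          lintegral_mono fun ξ => mul_le_mul_right (hσ' ξ) _
      _ = C' * ∫⁻ ξ, ENNReal.ofReal (c ξ) ∂ν := by
          rw [lintegral_mul_const _ hcm.ennreal_ofReal, mul_comm]
  have hprod2 : ∀ c : Ω → ℝ, Measurable c → (∀ ξ, 0 ≤ c ξ) →
      (∫⁻ p, ENNReal.ofReal (k p.1 p.2 * c p.2) ∂P) ≤ C' * ∫⁻ η, ENNReal.ofReal (c η) ∂ν := by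
    intro c hcm hc0
    have h0 : Measurable fun p : Ω × Ω => k p.1 p.2 * c p.2 := hkm2.mul (hcm.comp measurable_snd)
    rw [hPdef, lintegral_prod_symm (fun p => ENNReal.ofReal (k p.1 p.2 * c p.2))
      h0.ennreal_ofReal.aemeasurable]
    calc (∫⁻ η, ∫⁻ ξ, ENNReal.ofReal (k ξ η * c η) ∂ν ∂ν)
        = ∫⁻ η, ENNReal.ofReal (c η) * ∫⁻ ξ, ENNReal.ofReal (k η ξ) ∂ν ∂ν := by
          refine lintegral_congr fun η => ?_
          rw [← lintegral_const_mul _ (hkm η).ennreal_ofReal]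
          refine lintegral_congr fun ξ => ?_
          rw [← ENNReal.ofReal_mul (hc0 η), mul_comm (c η), hksymm ξ η]
      _ ≤ ∫⁻ η, ENNReal.ofReal (c η) * C' ∂ν :=
          lintegral_mono fun η => mul_le_mul_right (hσ' η) _
      _ = C' * ∫⁻ η, ENNReal.ofReal (c η) ∂ν := by
          rw [lintegral_mul_const _ hcm.ennreal_ofReal, mul_comm]
  have hg1int : Integrable g1 P := by
    refine ⟨hg1m.aestronglyMeasurable, ?_⟩
    rw [hasFiniteIntegral_iff_ofReal
      (Filter.Eventually.of_forall fun p => mul_nonneg (hk0 _ _) (by positivity))]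
    exact lt_of_le_of_lt
      (hprod1 (fun ξ => ‖w ξ‖ ^ 2) ((hwm.norm).pow_const 2) (fun ξ => by positivity))
      (ENNReal.mul_lt_top (lt_top_iff_ne_top.mpr hC'top) IhwT)
  have hg2int : Integrable g2 P := by
    refine ⟨hg2m.aestronglyMeasurable, ?_⟩
    rw [hasFiniteIntegral_iff_ofReal
      (Filter.Eventually.of_forall fun p => mul_nonneg (hk0 _ _) (by positivity))]
    exact lt_of_le_of_lt
      (hprod2 (fun ξ => ‖w ξ‖ ^ 2) ((hwm.norm).pow_const 2) (fun ξ => by positivity))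
      (ENNReal.mul_lt_top (lt_top_iff_ne_top.mpr hC'top) IhwT)
  have hKint : Integrable (fun p : Ω × Ω => k p.1 p.2) P := by
    refine ⟨hkm2.aestronglyMeasurable, ?_⟩
    rw [hasFiniteIntegral_iff_ofReal (Filter.Eventually.of_forall fun p => hk0 _ _)]
    have h1 := hprod1 (fun _ => (1:ℝ)) measurable_const (fun _ => zero_le_one)
    simp only [mul_one] at h1
    refine lt_of_le_of_lt h1 (ENNReal.mul_lt_top (lt_top_iff_ne_top.mpr hC'top) ?_)
    simp
  have hg3int : Integrable g3 P := by
    refine Integrable.mono (hg1int.add hg2int) hg3m.aestronglyMeasurable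
      (Filter.Eventually.of_forall fun p => ?_)
    have hre : |((starRingEnd ℂ) (w p.1) * w p.2).re| ≤ ‖w p.1‖ * ‖w p.2‖ := by
      refine le_trans (Complex.abs_re_le_norm _) ?_
      rw [norm_mul]
      simp
    have h2 : (0:ℝ) ≤ g1 p + g2 p := by
      have := mul_nonneg (hk0 p.1 p.2) (sq_nonneg ‖w p.1‖)
      have := mul_nonneg (hk0 p.1 p.2) (sq_nonneg ‖w p.2‖)
      simp only [hg1def, hg2def]
      positivity
    simp only [Pi.add_apply]
    rw [Real.norm_eq_abs, Real.norm_eq_abs, abs_of_nonneg h2]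
    simp only [hg1def, hg2def, hg3def]
    rw [abs_mul, abs_of_nonneg (hk0 p.1 p.2)]
    have h3 : |2 * ((starRingEnd ℂ) (w p.1) * w p.2).re| ≤ ‖w p.1‖ ^ 2 + ‖w p.2‖ ^ 2 := by
      rw [abs_mul, abs_two]
      nlinarith [abs_nonneg ((starRingEnd ℂ) (w p.1) * w p.2).re,
        sq_nonneg (‖w p.1‖ - ‖w p.2‖), norm_nonneg (w p.1), norm_nonneg (w p.2)]
    nlinarith [hk0 p.1 p.2, abs_nonneg (2 * ((starRingEnd ℂ) (w p.1) * w p.2).re)]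
  have hGint : Integrable G P := by
    have h : G = fun p => g1 p + g2 p - g3 p := funext hGsplit
    rw [h]
    exact (hg1int.add hg2int).sub hg3int
  -- complex product integrand
  have hg4int : Integrable (fun p : Ω × Ω => ((k p.1 p.2 : ℝ) : ℂ) * w p.2) P := by
    refine Integrable.mono ((hKint.add hg2int).div_const 2)
      ((Complex.measurable_ofReal.comp hkm2).mul (hwm.comp measurable_snd)).aestronglyMeasurable
      (Filter.Eventually.of_forall fun p => ?_)
    have h1 : ‖((k p.1 p.2 : ℝ) : ℂ) * w p.2‖ = k p.1 p.2 * ‖w p.2‖ := by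
      rw [norm_mul, Complex.norm_real, Real.norm_eq_abs, abs_of_nonneg (hk0 _ _)]
    simp only [Pi.add_apply]
    rw [h1, Real.norm_eq_abs]
    have h2 : (0:ℝ) ≤ (k p.1 p.2 + g2 p) / 2 := by
      have := hk0 p.1 p.2
      have : (0:ℝ) ≤ g2 p := mul_nonneg (hk0 p.1 p.2) (sq_nonneg ‖w p.2‖)
      simp only [hg2def] at this ⊢
      positivity
    rw [abs_of_nonneg h2]
    simp only [hg2def]
    nlinarith [hk0 p.1 p.2, sq_nonneg (‖w p.2‖ - 1), norm_nonneg (w p.2)]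
  have hg4sec : ∀ᵐ ξ ∂ν, Integrable (fun η => ((k ξ η : ℝ) : ℂ) * w η) ν :=
    hg4int.prod_right_ae
  -- the three integrals
  have hI1 : (∫ p, g1 p ∂P) = ∫ ξ, σ ξ * ‖w ξ‖ ^ 2 ∂ν := by
    rw [hPdef, integral_prod _ hg1int]
    refine integral_congr_ae (Filter.Eventually.of_forall fun ξ => ?_)
    simp only [hg1def]
    rw [integral_mul_const]
  have hI2 : (∫ p, g2 p ∂P) = ∫ η, σ η * ‖w η‖ ^ 2 ∂ν := by
    rw [hPdef, integral_prod_symm _ hg2int]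
    refine integral_congr_ae (Filter.Eventually.of_forall fun η => ?_)
    simp only [hg2def]
    have h1 : (∫ ξ, k ξ η * ‖w η‖ ^ 2 ∂ν) = ∫ ξ, k η ξ * ‖w η‖ ^ 2 ∂ν := by
      refine integral_congr_ae (Filter.Eventually.of_forall fun ξ => ?_)
      dsimp only
      rw [hksymm ξ η]
    rw [h1, integral_mul_const]
  have hI3 : (∫ p, g3 p ∂P) = 2 * ∫ ξ, σ ξ * ‖w ξ‖ ^ 2 ∂ν := by
    rw [hPdef, integral_prod _ hg3int]
    have hinner : ∀ᵐ ξ ∂ν, (∫ η, g3 (ξ, η) ∂ν) = 2 * (σ ξ * ‖w ξ‖ ^ 2) := by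
      filter_upwards [heqw, hg4sec] with ξ h1 h2
      have e1 : ∀ η, g3 (ξ, η)
          = 2 * (((starRingEnd ℂ) (w ξ) * (((k ξ η : ℝ) : ℂ) * w η)).re) := by
        intro η
        simp only [hg3def]
        rw [show (starRingEnd ℂ) (w ξ) * (((k ξ η : ℝ):ℂ) * w η)
            = ((k ξ η : ℝ):ℂ) * ((starRingEnd ℂ) (w ξ) * w η) by ring,
          Complex.re_ofReal_mul]
        ring
      rw [show (fun η => g3 (ξ, η))
          = fun η => 2 * (((starRingEnd ℂ) (w ξ) * (((k ξ η : ℝ) : ℂ) * w η)).re)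
          from funext e1]
      rw [integral_const_mul]
      congr 1
      have h3 : Integrable (fun η => (starRingEnd ℂ) (w ξ) * (((k ξ η : ℝ):ℂ) * w η)) ν :=
        h2.const_mul _
      have h4 : (∫ η, (starRingEnd ℂ) (w ξ) * (((k ξ η : ℝ):ℂ) * w η) ∂ν)
          = (starRingEnd ℂ) (w ξ) * (((σ ξ : ℝ):ℂ) * w ξ) := by
        rw [integral_const_mul, h1]
      have h5 : (starRingEnd ℂ) (w ξ) * (((σ ξ : ℝ):ℂ) * w ξ)
          = ((σ ξ * ‖w ξ‖ ^ 2 : ℝ) : ℂ) := by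
        rw [show (starRingEnd ℂ) (w ξ) * (((σ ξ : ℝ):ℂ) * w ξ)
            = ((σ ξ : ℝ):ℂ) * ((starRingEnd ℂ) (w ξ) * w ξ) by ring,
          ← Complex.normSq_eq_conj_mul_self, Complex.ofReal_mul]
        congr 1
        rw [Complex.normSq_eq_norm_sq]
      have h6 := integral_re h3
      rw [h4, h5] at h6
      simp only [RCLike.re_to_complex, Complex.ofReal_re] at h6
      exact h6
    rw [integral_congr_ae hinner, integral_const_mul]
  have hGzero : (∫ p, G p ∂P) = 0 := by
    have h : G = fun p => g1 p + g2 p - g3 p := funext hGsplit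
    have h12 : Integrable (fun p => g1 p + g2 p) P := hg1int.add hg2int
    rw [h, integral_sub h12 hg3int, integral_add hg1int hg2int, hI1, hI2, hI3]
    ring
  have hGae : G =ᵐ[P] 0 := by
    refine (integral_eq_zero_iff_of_nonneg ?_ hGint).mp hGzero
    intro p
    exact mul_nonneg (hk0 _ _) (sq_nonneg _)
  -- the diagonal is null
  have hdiagset : MeasurableSet {p : Ω × Ω | dist p.1 p.2 = 0} :=
    measurable_dist (measurableSet_singleton 0)
  have hdiag0 : P {p : Ω × Ω | dist p.1 p.2 = 0} = 0 := by
    rw [hPdef, Measure.prod_apply hdiagset]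
    have h1 : ∀ ξ : Ω, (Prod.mk ξ ⁻¹' {p : Ω × Ω | dist p.1 p.2 = 0}) = {ξ} := by
      intro ξ
      ext η
      simp [dist_eq_zero, eq_comm]
    simp only [h1]
    simp [hnoatom]
  have hdiag : ∀ᵐ p ∂P, ¬ dist p.1 p.2 = 0 := by
    rw [ae_iff]
    simpa using hdiag0
  have hww : ∀ᵐ p ∂P, w p.1 = w p.2 := by
    filter_upwards [hGae, hdiag] with p h1 h2
    have hd : 0 < dist p.1 p.2 := lt_of_le_of_ne dist_nonneg (Ne.symm h2)
    have hkpos : 0 < k p.1 p.2 := Real.rpow_pos_of_pos hd α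
    have h3 : G p = 0 := h1
    have h4 : ‖w p.1 - w p.2‖ ^ 2 = 0 :=
      (mul_eq_zero.mp h3).resolve_left (ne_of_gt hkpos)
    have h5 : w p.1 - w p.2 = 0 := by
      rw [← norm_eq_zero]
      exact pow_eq_zero_iff (two_ne_zero) |>.mp h4
    exact sub_eq_zero.mp h5
  have hae2 := Measure.ae_ae_of_ae_prod hww
  haveI : (ae ν).NeBot := ae_neBot.mpr (IsProbabilityMeasure.ne_zero ν)
  obtain ⟨ξ₀, hξ₀⟩ := hae2.exists
  refine ⟨w ξ₀, hvw.trans ?_⟩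
  filter_upwards [hξ₀] with η hη
  exact hη.symm
end

section
/- The sesquilinear form (v, w) ↦ ⟨v, I_t w⟩_{L²} is invariant under π_t(g): for all v, w ∈ L²(Ω, ν), ⟨π_t(g) v, I_t(π_t(g) w)⟩_{L²} = ⟨v, I_t w⟩_{L²}. (Consequently, when I_t is a positive operator, π_t(g) acts unitarily on the Hilbert space obtained from this form.) -/
open MeasureTheory Metric
open scoped ENNReal

/-- Algebraic transfer of the conformality identity to an arbitrary exponent. -/
lemma ks_key_real (A B1 B2 C Dd e : ℝ) (hA : 0 ≤ A) (hB1 : 0 < B1) (hB2 : 0 < B2)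
    (hC : 0 ≤ C) (hDd : 0 < Dd) (h : A ^ (2*Dd) * (B1 * B2) = C ^ (2*Dd)) :
    B1 ^ (e/(2*Dd)) * A ^ e * B2 ^ (e/(2*Dd)) = C ^ e := by
  have h2D : (2*Dd) ≠ 0 := by positivity
  have hCe : C ^ e = (C ^ (2*Dd)) ^ (e/(2*Dd)) := by
    rw [← Real.rpow_mul hC]
    congr 1
    field_simp
  rw [hCe, ← h, Real.mul_rpow (Real.rpow_nonneg hA _) (by positivity),
      Real.mul_rpow hB1.le hB2.le, ← Real.rpow_mul hA]
  rw [show 2*Dd*(e/(2*Dd)) = e by field_simp]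
  ring

/-- Change of variables for the conformal map `g` whose pushforward of `ν`
has density `j`. -/
lemma ks_cv {Ω : Type*} [MeasurableSpace Ω] (ν : Measure Ω)
    (g : Ω → Ω) (hg : Measurable g)
    (j : Ω → ℝ) (hj : Measurable j) (hjpos : ∀ᵐ ξ ∂ν, 0 < j ξ)
    (hmap : Measure.map g ν = ν.withDensity (fun ξ => ENNReal.ofReal (j ξ)))
    (f : Ω → ℂ) (hf : AEStronglyMeasurable f ν) :
    ∫ x, f (g x) * ((j (g x) : ℂ))⁻¹ ∂ν = ∫ x, f x ∂ν := by
  have hwd : ν.withDensity (fun ξ => ENNReal.ofReal (j ξ)) ≪ ν :=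
    withDensity_absolutelyContinuous _ _
  have hjinv : AEStronglyMeasurable (fun x => ((j x : ℂ))⁻¹) ν :=
    ((Complex.measurable_ofReal.comp hj).inv).aestronglyMeasurable
  have hhm : AEStronglyMeasurable (fun x => f x * ((j x : ℂ))⁻¹) (Measure.map g ν) := by
    rw [hmap]; exact (hf.mul hjinv).mono_ac hwd
  have h1 : ∫ x, f (g x) * ((j (g x) : ℂ))⁻¹ ∂ν
      = ∫ x, f x * ((j x : ℂ))⁻¹ ∂(Measure.map g ν) :=
    (integral_map hg.aemeasurable hhm).symm
  rw [h1, hmap]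
  have h2 : (fun ξ => ENNReal.ofReal (j ξ)) = fun ξ => ((Real.toNNReal (j ξ) : NNReal) : ℝ≥0∞) :=
    rfl
  rw [h2, integral_withDensity_eq_integral_smul (show Measurable fun x => (j x).toNNReal from measurable_real_toNNReal.comp hj)]
  refine integral_congr_ae ?_
  filter_upwards [hjpos] with x hx
  have hxne : (j x : ℂ) ≠ 0 := Complex.ofReal_ne_zero.mpr hx.ne'
  rw [NNReal.smul_def, Real.coe_toNNReal _ hx.le, Complex.real_smul]
  field_simp

/-- Invariance of the sesquilinear form `(v,w) ↦ ⟨v, I_t w⟩_{L²}` under `π_t(g)`: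
`⟨π_t(g) v, I_t (π_t(g) w)⟩ = ⟨v, I_t w⟩` for all `v, w ∈ L²(Ω,ν)`, where
`(π_t(g) v)(ξ) = j(ξ)^{1/2+t} v(g⁻¹ ξ)`. -/
theorem knappStein_form_invariant
    {Ω : Type*} [MetricSpace Ω] [CompactSpace Ω] [MeasurableSpace Ω] [BorelSpace Ω]
    (ν : Measure Ω) [IsProbabilityMeasure ν]
    (D t : ℝ) (hD : 0 < D) (ht : 0 < t)
    (M : ℝ) (hM : ∀ η : Ω,
      (∫⁻ ξ, ENNReal.ofReal (dist ξ η ^ (-(1 - 2*t) * D)) ∂ν) ≤ ENNReal.ofReal M)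
    (g ginv : Ω → Ω) (hg : Measurable g) (hginv : Measurable ginv)
    (hgl : Function.LeftInverse ginv g) (hgr : Function.RightInverse ginv g)
    (j : Ω → ℝ) (hj : Measurable j)
    (hjpos : ∀ᵐ ξ ∂ν, 0 < j ξ)
    (c : ℝ) (hc : 0 < c)
    (hjbdd : ∀ᵐ ξ ∂ν, j ξ ≤ c ∧ (j ξ)⁻¹ ≤ c)
    (hmap : Measure.map g ν = ν.withDensity (fun ξ => ENNReal.ofReal (j ξ)))
    (hconf : ∀ᵐ p ∂(ν.prod ν),
      dist (g p.1) (g p.2) ^ (2*D) * (j (g p.1) * j (g p.2)) = dist p.1 p.2 ^ (2*D)) :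
    ∀ v w : Ω → ℂ, MemLp v 2 ν → MemLp w 2 ν →
      (∫ ξ, (((j ξ ^ ((1:ℝ)/2 + t) : ℝ) : ℂ) * v (ginv ξ))
          * (starRingEnd ℂ) (∫ η, ((dist ξ η ^ (-(1 - 2*t) * D) : ℝ) : ℂ)
              * (((j η ^ ((1:ℝ)/2 + t) : ℝ) : ℂ) * w (ginv η)) ∂ν) ∂ν)
        = ∫ ξ, v ξ * (starRingEnd ℂ)
            (∫ η, ((dist ξ η ^ (-(1 - 2*t) * D) : ℝ) : ℂ) * w η ∂ν) ∂ν := by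
  intro v w hv hw
  set e : ℝ := -(1 - 2*t) * D with he
  -- quasi-measure-preserving facts
  have hwdac : ν.withDensity (fun ξ => ENNReal.ofReal (j ξ)) ≪ ν :=
    withDensity_absolutelyContinuous _ _
  have hgq : Measure.QuasiMeasurePreserving g ν ν := ⟨hg, hmap ▸ hwdac⟩
  have hacwd : ν ≪ ν.withDensity (fun ξ => ENNReal.ofReal (j ξ)) := by
    refine withDensity_absolutelyContinuous' (hj.ennreal_ofReal.aemeasurable) ?_
    filter_upwards [hjpos] with x hx
    simp [ENNReal.ofReal_eq_zero, not_le, hx]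
  have hginvac : Measure.map ginv ν ≪ ν := by
    have h1 : Measure.map ginv (ν.withDensity (fun ξ => ENNReal.ofReal (j ξ))) = ν := by
      rw [← hmap, Measure.map_map hginv hg]
      have : ginv ∘ g = id := funext fun x => hgl x
      rw [this, Measure.map_id]
    calc Measure.map ginv ν ≪ Measure.map ginv (ν.withDensity (fun ξ => ENNReal.ofReal (j ξ))) :=
          hacwd.map hginv
      _ = ν := h1
    
  have hginvq : Measure.QuasiMeasurePreserving ginv ν ν := ⟨hginv, hginvac⟩
  -- positivity of j ∘ g
  have hjgpos : ∀ᵐ ξ ∂ν, 0 < j (g ξ) := hgq.ae hjpos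
  -- measurability facts
  have hJc : Measurable (fun x => ((j x ^ ((1:ℝ)/2 + t) : ℝ) : ℂ)) :=
    Complex.measurable_ofReal.comp (hj.pow measurable_const)
  have hwginv : AEStronglyMeasurable (fun η => w (ginv η)) ν :=
    hw.aestronglyMeasurable.comp_quasiMeasurePreserving hginvq
  have hvginv : AEStronglyMeasurable (fun η => v (ginv η)) ν :=
    hv.aestronglyMeasurable.comp_quasiMeasurePreserving hginvq
  have hPw : AEStronglyMeasurable
      (fun η => ((j η ^ ((1:ℝ)/2 + t) : ℝ) : ℂ) * w (ginv η)) ν :=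
    hJc.aestronglyMeasurable.mul hwginv
  have hKm : Measurable (fun p : Ω × Ω => ((dist p.1 p.2 ^ e : ℝ) : ℂ)) :=
    Complex.measurable_ofReal.comp (measurable_dist.pow measurable_const)
  have hF : AEStronglyMeasurable
      (fun p : Ω × Ω => ((dist p.1 p.2 ^ e : ℝ) : ℂ)
        * (((j p.2 ^ ((1:ℝ)/2 + t) : ℝ) : ℂ) * w (ginv p.2))) (ν.prod ν) :=
    hKm.aestronglyMeasurable.mul hPw.comp_snd
  have hT : AEStronglyMeasurable
      (fun ξ => ∫ η, ((dist ξ η ^ e : ℝ) : ℂ)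
        * (((j η ^ ((1:ℝ)/2 + t) : ℝ) : ℂ) * w (ginv η)) ∂ν) ν :=
    hF.integral_prod_right'
  have hΦ : AEStronglyMeasurable
      (fun ξ => (((j ξ ^ ((1:ℝ)/2 + t) : ℝ) : ℂ) * v (ginv ξ))
        * (starRingEnd ℂ) (∫ η, ((dist ξ η ^ e : ℝ) : ℂ)
            * (((j η ^ ((1:ℝ)/2 + t) : ℝ) : ℂ) * w (ginv η)) ∂ν)) ν := by
    refine (hJc.aestronglyMeasurable.mul hvginv).mul ?_
    exact (Complex.continuous_conj.comp_aestronglyMeasurable hT)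
  -- outer change of variables
  rw [← ks_cv ν g hg j hj hjpos hmap _ hΦ]
  -- conformality a.e. in iterated form
  have hconf' : ∀ᵐ ξ ∂ν, ∀ᵐ η ∂ν,
      dist (g ξ) (g η) ^ (2*D) * (j (g ξ) * j (g η)) = dist ξ η ^ (2*D) :=
    Measure.ae_ae_of_ae_prod hconf
  refine integral_congr_ae ?_
  filter_upwards [hconf', hjgpos] with ξ hcξ hjξ
  -- inner change of variables (valid for this fixed ξ)
  have hfξ : AEStronglyMeasurable
      (fun η => ((dist (g ξ) η ^ e : ℝ) : ℂ)
        * (((j η ^ ((1:ℝ)/2 + t) : ℝ) : ℂ) * w (ginv η))) ν := by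
    refine AEStronglyMeasurable.mul ?_ hPw
    exact (Complex.measurable_ofReal.comp
      ((measurable_const.dist measurable_id).pow measurable_const)).aestronglyMeasurable
  have hinnercv : ∫ η, ((dist (g ξ) (g η) ^ e : ℝ) : ℂ)
        * (((j (g η) ^ ((1:ℝ)/2 + t) : ℝ) : ℂ) * w (ginv (g η))) * ((j (g η) : ℂ))⁻¹ ∂ν
      = ∫ η, ((dist (g ξ) η ^ e : ℝ) : ℂ)
        * (((j η ^ ((1:ℝ)/2 + t) : ℝ) : ℂ) * w (ginv η)) ∂ν :=
    ks_cv ν g hg j hj hjpos hmap _ hfξ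
  -- the real scalar attached to ξ
  set r : ℝ := j (g ξ) ^ ((1:ℝ)/2 + t) * (j (g ξ))⁻¹ with hr
  have hrpow : ∀ a : ℝ, 0 < a → a ^ ((1:ℝ)/2 + t) * a⁻¹ = a ^ (e/(2*D)) := by
    intro a ha
    rw [← Real.rpow_neg_one a, ← Real.rpow_add ha]
    congr 1
    rw [he]
    field_simp
    ring
  -- key inner integral identity
  have hinner : (r : ℂ) * ∫ η, ((dist (g ξ) (g η) ^ e : ℝ) : ℂ)
        * (((j (g η) ^ ((1:ℝ)/2 + t) : ℝ) : ℂ) * w (ginv (g η))) * ((j (g η) : ℂ))⁻¹ ∂ν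
      = ∫ η, ((dist ξ η ^ e : ℝ) : ℂ) * w η ∂ν := by
    rw [← integral_const_mul]
    refine integral_congr_ae ?_
    filter_upwards [hcξ, hjgpos] with η hcη hjη
    have hreal : r * dist (g ξ) (g η) ^ e * (j (g η) ^ ((1:ℝ)/2 + t) * (j (g η))⁻¹)
        = dist ξ η ^ e := by
      rw [hr, hrpow _ hjξ, hrpow _ hjη]
      exact ks_key_real (dist (g ξ) (g η)) (j (g ξ)) (j (g η)) (dist ξ η) D e
        dist_nonneg hjξ hjη dist_nonneg hD hcη
    calc (r : ℂ) * (((dist (g ξ) (g η) ^ e : ℝ) : ℂ)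
          * (((j (g η) ^ ((1:ℝ)/2 + t) : ℝ) : ℂ) * w (ginv (g η))) * ((j (g η) : ℂ))⁻¹)
        = ((r * dist (g ξ) (g η) ^ e * (j (g η) ^ ((1:ℝ)/2 + t) * (j (g η))⁻¹) : ℝ) : ℂ)
            * w (ginv (g η)) := by push_cast; ring
      _ = ((dist ξ η ^ e : ℝ) : ℂ) * w η := by rw [hreal, hgl η]
  -- now conclude the outer pointwise identity
  rw [hgl ξ]
  have hconjr : (starRingEnd ℂ) ((r : ℂ)) = (r : ℂ) := Complex.conj_ofReal r
  calc (((j (g ξ) ^ ((1:ℝ)/2 + t) : ℝ) : ℂ) * v ξ)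
        * (starRingEnd ℂ) (∫ η, ((dist (g ξ) η ^ e : ℝ) : ℂ)
            * (((j η ^ ((1:ℝ)/2 + t) : ℝ) : ℂ) * w (ginv η)) ∂ν) * ((j (g ξ) : ℂ))⁻¹
      = v ξ * ((r : ℂ) * (starRingEnd ℂ) (∫ η, ((dist (g ξ) η ^ e : ℝ) : ℂ)
            * (((j η ^ ((1:ℝ)/2 + t) : ℝ) : ℂ) * w (ginv η)) ∂ν)) := by
        rw [hr]; push_cast; ring
    _ = v ξ * (starRingEnd ℂ) ((r : ℂ) * ∫ η, ((dist (g ξ) η ^ e : ℝ) : ℂ)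
            * (((j η ^ ((1:ℝ)/2 + t) : ℝ) : ℂ) * w (ginv η)) ∂ν) := by
        rw [map_mul, hconjr]
    _ = v ξ * (starRingEnd ℂ) (∫ η, ((dist ξ η ^ e : ℝ) : ℂ) * w η ∂ν) := by
        rw [← hinnercv, hinner]
end

section
/- Let H be a complex Hilbert space, S a set, and π, π' : S → B(H) two maps into the bounded operators on H such that ⟨π(s) v, π'(s) w⟩ = ⟨v, w⟩ for every s ∈ S and all v, w ∈ H. Assume the pair (π, π') is weak mixing: for all finite subsets F, F' of H and every ε > 0 there exists s ∈ S such that |⟨π(s) v, w⟩ · ⟨v', π'(s) w'⟩| < ε for all v, w ∈ F and all v', w' ∈ F'. Then the only finite-dimensional subspace V ⊆ H satisfying π(s) V ⊆ V for all s ∈ S is V = {0}. -/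
open scoped InnerProductSpace

private lemma expand_inner_aux {H : Type*} [NormedAddCommGroup H] [InnerProductSpace ℂ H]
    {V : Submodule ℂ H} {ι : Type*} [Fintype ι] (b : OrthonormalBasis ι ℂ ↥V)
    (x : ↥V) (y : H) :
    (inner ℂ ((x : H)) y : ℂ) = ∑ i, (inner ℂ (x : H) ((b i : H)) : ℂ) * inner ℂ ((b i : H)) y := by
  conv_lhs => rw [← b.sum_repr x]
  rw [Submodule.coe_sum]
  rw [sum_inner]
  refine Finset.sum_congr rfl fun i _ => ?_
  rw [Submodule.coe_smul, inner_smul_left]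
  congr 1
  rw [b.repr_apply_apply]
  exact inner_conj_symm x (b i)

/-- A weak mixing dual system of Hilbertian representations admits no nonzero
finite-dimensional invariant subspace. -/
theorem weak_mixing_no_finite_dimensional_subrep
    {H : Type*} [NormedAddCommGroup H] [InnerProductSpace ℂ H] [CompleteSpace H]
    {S : Type*} (π π' : S → (H →L[ℂ] H))
    (hdual : ∀ s : S, ∀ v w : H, (inner ℂ (π s v) (π' s w) : ℂ) = inner ℂ v w)
    (hwm : ∀ F F' : Set H, F.Finite → F'.Finite → ∀ ε : ℝ, 0 < ε →
      ∃ s : S, ∀ v ∈ F, ∀ w ∈ F, ∀ v' ∈ F', ∀ w' ∈ F',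
        ‖(inner ℂ (π s v) w : ℂ) * (inner ℂ v' (π' s w') : ℂ)‖ < ε) :
    ∀ V : Submodule ℂ H, FiniteDimensional ℂ ↥V →
      (∀ s : S, ∀ x ∈ V, π s x ∈ V) → V = ⊥ := by
  intro V hfd hinv
  by_contra hV
  obtain ⟨v, hvV, hv0⟩ := Submodule.exists_mem_ne_zero_of_ne_bot hV
  set n := Module.finrank ℂ ↥V with hn
  have b : OrthonormalBasis (Fin n) ℂ ↥V := stdOrthonormalBasis ℂ ↥V
  have hnpos : 0 < n := by
    rw [hn]
    exact Module.finrank_pos_iff.mpr (Submodule.nontrivial_iff_ne_bot.mpr hV)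
  have hvnorm : (0:ℝ) < ‖v‖ ^ 2 := by
    have := norm_pos_iff.mpr hv0; positivity
  set ε : ℝ := ‖v‖ ^ 2 / n with hε
  have hεpos : 0 < ε := by positivity
  set F : Set H := insert v (Set.range fun i => ((b i : H))) with hF
  have hFfin : F.Finite := (Set.finite_range _).insert v
  obtain ⟨s, hs⟩ := hwm F F hFfin hFfin ε hεpos
  -- key computation
  have hexp : (inner ℂ v v : ℂ) =
      ∑ i, (inner ℂ (π s v) ((b i : H)) : ℂ) * inner ℂ ((b i : H)) (π' s v) := by
    rw [← hdual s v v]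
    exact expand_inner_aux b ⟨π s v, hinv s v hvV⟩ (π' s v)
  have hnormv : ‖(inner ℂ v v : ℂ)‖ = ‖v‖ ^ 2 := by
    rw [inner_self_eq_norm_sq_to_K]
    simp [pow_two]
  have hterm : ∀ i : Fin n,
      ‖(inner ℂ (π s v) ((b i : H)) : ℂ) * inner ℂ ((b i : H)) (π' s v)‖ < ε := by
    intro i
    exact hs v (Set.mem_insert _ _) (b i) (Set.mem_insert_of_mem _ ⟨i, rfl⟩)
      (b i) (Set.mem_insert_of_mem _ ⟨i, rfl⟩) v (Set.mem_insert _ _)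
  have hlt : ‖(inner ℂ v v : ℂ)‖ < n * ε := by
    calc ‖(inner ℂ v v : ℂ)‖
        ≤ ∑ i : Fin n, ‖(inner ℂ (π s v) ((b i : H)) : ℂ) * inner ℂ ((b i : H)) (π' s v)‖ := by
          rw [hexp]; exact norm_sum_le _ _
      _ < ∑ _i : Fin n, ε := by
          apply Finset.sum_lt_sum_of_nonempty
          · exact Finset.univ_nonempty_iff.mpr (Fin.pos_iff_nonempty.mp hnpos)
          · intro i _; exact hterm i
      _ = n * ε := by simp [mul_comm]
  rw [hnormv, hε, mul_div_cancel₀] at hlt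
  · exact lt_irrefl _ hlt
  · exact_mod_cast hnpos.ne'
end

section
/- For every t > 0 there exists C ≥ 1 such that for every η ∈ Ω and every s ∈ (0, diam Ω]: C⁻¹ · s^{−2tD} ≤ ∫_Ω (max(d(ξ, η), s))^{−(1+2t)D} dν(ξ) ≤ C · s^{−2tD}. -/
open MeasureTheory Metric
open scoped ENNReal

/-- Harish-Chandra–Anker type estimate: for every `t > 0` there is `C ≥ 1` such that
for all `η ∈ Ω` and `s ∈ (0, diam Ω]`,
`C⁻¹ s^{-2tD} ≤ ∫ (max(d(ξ,η), s))^{-(1+2t)D} dν(ξ) ≤ C s^{-2tD}`. -/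
theorem harishChandra_anker_estimate
    {Ω : Type*} [MetricSpace Ω] [CompactSpace Ω] [MeasurableSpace Ω] [BorelSpace Ω]
    (ν : Measure Ω) [IsProbabilityMeasure ν]
    (D : ℝ) (hD : 0 < D)
    (hdiam : Metric.diam (Set.univ : Set Ω) ≤ 1)
    (Cν : ℝ) (hCν : 1 ≤ Cν)
    (hAR : ∀ ξ : Ω, ∀ r : ℝ, 0 < r → r ≤ Metric.diam (Set.univ : Set Ω) →
      ENNReal.ofReal (Cν⁻¹ * r ^ D) ≤ ν (Metric.ball ξ r) ∧
        ν (Metric.ball ξ r) ≤ ENNReal.ofReal (Cν * r ^ D)) :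
    ∀ t : ℝ, 0 < t → ∃ C : ℝ, 1 ≤ C ∧
      ∀ η : Ω, ∀ s : ℝ, 0 < s → s ≤ Metric.diam (Set.univ : Set Ω) →
        C⁻¹ * s ^ (-(2*t*D))
            ≤ (∫ ξ, (max (dist ξ η) s) ^ (-(1 + 2*t) * D) ∂ν) ∧
        (∫ ξ, (max (dist ξ η) s) ^ (-(1 + 2*t) * D) ∂ν)
            ≤ C * s ^ (-(2*t*D)) := by
  haveI : SecondCountableTopology Ω := EMetric.secondCountable_of_sigmaCompact Ω
  intro t ht
  set d0 := Metric.diam (Set.univ : Set Ω) with hd0def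
  set b := 2*t*D with hbdef
  have hb : 0 < b := by rw [hbdef]; positivity
  set a := (1+2*t)*D with hadef
  have ha : 0 < a := by rw [hadef]; positivity
  have haDb : a = D + b := by rw [hadef, hbdef]; ring
  set r : ℝ := (2:ℝ) ^ (-b) with hrdef
  have hr0 : 0 < r := Real.rpow_pos_of_pos two_pos _
  have hr1 : r < 1 := Real.rpow_lt_one_of_one_lt_of_neg one_lt_two (neg_neg_of_pos hb)
  set Cν' : ℝ := Cν + d0 ^ (-D) with hCν'def
  have hCν'pos : 0 < Cν' := by
    have : (0:ℝ) ≤ d0 ^ (-D) := Real.rpow_nonneg Metric.diam_nonneg _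
    rw [hCν'def]; linarith
  have hCνle : Cν ≤ Cν' := by
    have : (0:ℝ) ≤ d0 ^ (-D) := Real.rpow_nonneg Metric.diam_nonneg _
    rw [hCν'def]; linarith
  set K : ℝ := Cν' + Cν' * 2 ^ (D:ℝ) * (1 - r)⁻¹ with hKdef
  have h2D : (0:ℝ) < 2 ^ (D:ℝ) := Real.rpow_pos_of_pos two_pos _
  have hK0 : 0 < K := by
    have h1r : (0:ℝ) < (1 - r)⁻¹ := by
      apply inv_pos.mpr; linarith
    rw [hKdef]; positivity
  refine ⟨Cν + K, by linarith, ?_⟩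
  intro η s hs hsd
  have hd0pos : 0 < d0 := lt_of_lt_of_le hs hsd
  -- upper Ahlfors bound valid for all radii
  have hup : ∀ (ξ : Ω) (R : ℝ), 0 < R → ν (ball ξ R) ≤ ENNReal.ofReal (Cν' * R ^ D) := by
    intro ξ R hR
    rcases le_or_gt R d0 with hRd | hRd
    · refine ((hAR ξ R hR hRd).2).trans (ENNReal.ofReal_le_ofReal ?_)
      have : (0:ℝ) ≤ R ^ D := Real.rpow_nonneg hR.le _
      nlinarith
    · have h1 : ν (ball ξ R) ≤ 1 := by
        rw [← measure_univ (μ := ν)]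
        exact measure_mono (Set.subset_univ _)
      refine h1.trans ?_
      rw [← ENNReal.ofReal_one]
      apply ENNReal.ofReal_le_ofReal
      have hd0D : (0:ℝ) < d0 ^ D := Real.rpow_pos_of_pos hd0pos _
      have hmono : d0 ^ D ≤ R ^ D :=
        Real.rpow_le_rpow Metric.diam_nonneg hRd.le hD.le
      have hinv : d0 ^ (-D) = (d0 ^ D)⁻¹ := Real.rpow_neg Metric.diam_nonneg _
      have h2 : (1:ℝ) ≤ d0 ^ (-D) * R ^ D := by
        rw [hinv, inv_mul_eq_div, le_div_iff₀ hd0D]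
        linarith
      have hRD : (0:ℝ) ≤ R ^ D := Real.rpow_nonneg hR.le _
      have : d0 ^ (-D) ≤ Cν' := by rw [hCν'def]; linarith
      nlinarith
  -- the integrand
  have hmeasf : Measurable fun ξ : Ω => (max (dist ξ η) s) ^ (-a) :=
    ((measurable_dist.comp (measurable_id.prodMk measurable_const)).max
      measurable_const).pow measurable_const
  have hmaxpos : ∀ ξ : Ω, 0 < max (dist ξ η) s := fun ξ =>
    lt_of_lt_of_le hs (le_max_right _ _)
  have hfnn : ∀ ξ : Ω, 0 ≤ (max (dist ξ η) s) ^ (-a) := fun ξ =>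
    Real.rpow_nonneg (hmaxpos ξ).le _
  set A := ∫⁻ ξ, ENNReal.ofReal ((max (dist ξ η) s) ^ (-a)) ∂ν with hAdef
  have hint : (∫ ξ, (max (dist ξ η) s) ^ (-(1 + 2*t) * D) ∂ν) = A.toReal := by
    have h1 : ∀ ξ : Ω, (max (dist ξ η) s) ^ (-(1 + 2*t) * D)
        = (max (dist ξ η) s) ^ (-a) := by
      intro ξ; congr 1; rw [hadef]; ring
    simp_rw [h1]
    exact integral_eq_lintegral_of_nonneg_ae (ae_of_all _ hfnn) hmeasf.aestronglyMeasurable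
  have hss : s ^ (-a) * s ^ D = s ^ (-b) := by
    rw [← Real.rpow_add hs]; congr 1; rw [haDb]; ring
  -- value on the ball
  have hball_eq : (∫⁻ ξ in ball η s, ENNReal.ofReal ((max (dist ξ η) s) ^ (-a)) ∂ν)
      = ENNReal.ofReal (s ^ (-a)) * ν (ball η s) := by
    rw [setLIntegral_congr_fun measurableSet_ball
      (fun ξ (hξ : ξ ∈ ball η s) => show ENNReal.ofReal ((max (dist ξ η) s) ^ (-a))
        = ENNReal.ofReal (s ^ (-a)) by
        rw [max_eq_right (le_of_lt (mem_ball.mp hξ))])]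
    exact setLIntegral_const _ _
  -- lower bound
  have hlow : ENNReal.ofReal (Cν⁻¹ * s ^ (-b)) ≤ A := by
    have heq : Cν⁻¹ * s ^ (-b) = s ^ (-a) * (Cν⁻¹ * s ^ D) := by
      rw [← hss]; ring
    calc ENNReal.ofReal (Cν⁻¹ * s ^ (-b))
        = ENNReal.ofReal (s ^ (-a)) * ENNReal.ofReal (Cν⁻¹ * s ^ D) := by
          rw [heq, ENNReal.ofReal_mul (Real.rpow_nonneg hs.le _)]
      _ ≤ ENNReal.ofReal (s ^ (-a)) * ν (ball η s) :=
          mul_le_mul_right (hAR η s hs hsd).1 _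
      _ = ∫⁻ ξ in ball η s, ENNReal.ofReal ((max (dist ξ η) s) ^ (-a)) ∂ν := hball_eq.symm
      _ ≤ A := setLIntegral_le_lintegral _ _
  -- covering of the space
  have hU : (Set.univ : Set Ω) = ball η s ∪
      ⋃ k : ℕ, (ball η (2^(k+1) * s) \ ball η (2^k * s)) := by
    apply Set.eq_of_subset_of_subset ?_ (Set.subset_univ _)
    intro ξ _
    rcases lt_or_ge (dist ξ η) s with hξ | hξ
    · exact Or.inl (mem_ball.mpr hξ)
    · set d := dist ξ η with hddef
      have hds : 1 ≤ d / s := (one_le_div hs).mpr hξ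
      have hdpos : 0 < d / s := lt_of_lt_of_le zero_lt_one hds
      set k := ⌊Real.logb 2 (d/s)⌋₊ with hkdef
      have hL0 : 0 ≤ Real.logb 2 (d/s) := Real.logb_nonneg one_lt_two hds
      have h1 : (2:ℝ)^(k:ℕ) ≤ d/s := by
        rw [← Real.rpow_natCast]
        calc (2:ℝ)^(k:ℝ) ≤ (2:ℝ)^(Real.logb 2 (d/s)) :=
              Real.rpow_le_rpow_of_exponent_le one_le_two (Nat.floor_le hL0)
          _ = d/s := Real.rpow_logb two_pos (by norm_num) hdpos
      have h2 : d/s < (2:ℝ)^(k+1 : ℕ) := by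
        rw [← Real.rpow_natCast]
        calc d/s = (2:ℝ)^(Real.logb 2 (d/s)) :=
              (Real.rpow_logb two_pos (by norm_num) hdpos).symm
          _ < (2:ℝ)^((k+1 : ℕ):ℝ) := by
              apply Real.rpow_lt_rpow_of_exponent_lt one_lt_two
              push_cast
              exact Nat.lt_floor_add_one _
      refine Or.inr (Set.mem_iUnion.mpr ⟨k, ?_, ?_⟩)
      · exact mem_ball.mpr ((div_lt_iff₀ hs).mp h2)
      · intro hmem
        exact absurd (mem_ball.mp hmem) (not_lt.mpr ((le_div_iff₀ hs).mp h1))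
  -- bound on the ball term
  have hterm_ball : (∫⁻ ξ in ball η s, ENNReal.ofReal ((max (dist ξ η) s) ^ (-a)) ∂ν)
      ≤ ENNReal.ofReal (Cν' * s ^ (-b)) := by
    rw [hball_eq]
    calc ENNReal.ofReal (s ^ (-a)) * ν (ball η s)
        ≤ ENNReal.ofReal (s ^ (-a)) * ENNReal.ofReal (Cν' * s ^ D) :=
          mul_le_mul_right (hup η s hs) _
      _ = ENNReal.ofReal (Cν' * s ^ (-b)) := by
          rw [← ENNReal.ofReal_mul (Real.rpow_nonneg hs.le _)]
          congr 1
          rw [← hss]; ring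
  -- bound on each annulus term
  have hterm_k : ∀ k : ℕ,
      (∫⁻ ξ in ball η (2^(k+1) * s) \ ball η (2^k * s),
        ENNReal.ofReal ((max (dist ξ η) s) ^ (-a)) ∂ν)
      ≤ ENNReal.ofReal (Cν' * 2 ^ (D:ℝ) * s ^ (-b) * r^k) := by
    intro k
    have h2k : (0:ℝ) < 2^k * s := by positivity
    have h2k1 : (0:ℝ) < 2^(k+1) * s := by positivity
    have hbd : ∀ ξ ∈ ball η (2^(k+1) * s) \ ball η (2^k * s),
        ENNReal.ofReal ((max (dist ξ η) s) ^ (-a))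
          ≤ ENNReal.ofReal ((2^k * s) ^ (-a)) := by
      intro ξ hξ
      apply ENNReal.ofReal_le_ofReal
      have hd : 2^k * s ≤ dist ξ η := not_lt.mp (fun h => hξ.2 (mem_ball.mpr h))
      exact Real.rpow_le_rpow_of_nonpos h2k (hd.trans (le_max_left _ _)) (neg_nonpos.mpr ha.le)
    have key : (2^k * s) ^ (-a) * (Cν' * (2^(k+1) * s) ^ D)
        = Cν' * 2 ^ (D:ℝ) * s ^ (-b) * r^k := by
      have e1 : ((2:ℝ)^k * s) ^ (-a) = (2:ℝ)^((k:ℝ)*(-a)) * s ^ (-a) := by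
        rw [Real.mul_rpow (by positivity) hs.le, ← Real.rpow_natCast (2:ℝ) k,
          ← Real.rpow_mul (by norm_num : (0:ℝ) ≤ 2)]
      have e2 : ((2:ℝ)^(k+1) * s) ^ D = (2:ℝ)^(((k:ℝ)+1)*D) * s ^ D := by
        rw [Real.mul_rpow (by positivity) hs.le, ← Real.rpow_natCast (2:ℝ) (k+1),
          ← Real.rpow_mul (by norm_num : (0:ℝ) ≤ 2)]
        push_cast
        ring_nf
      have e3 : r^k = (2:ℝ)^((-b)*(k:ℝ)) := by
        rw [hrdef, Real.rpow_mul (by norm_num : (0:ℝ) ≤ 2), Real.rpow_natCast]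
      have e4 : (2:ℝ)^((k:ℝ)*(-a)) * (2:ℝ)^(((k:ℝ)+1)*D)
          = 2 ^ (D:ℝ) * (2:ℝ)^((-b)*(k:ℝ)) := by
        rw [← Real.rpow_add two_pos, ← Real.rpow_add two_pos]
        congr 1
        rw [haDb]; ring
      rw [e1, e2, e3]
      calc (2:ℝ)^((k:ℝ)*(-a)) * s ^ (-a) * (Cν' * ((2:ℝ)^(((k:ℝ)+1)*D) * s ^ D))
          = Cν' * ((2:ℝ)^((k:ℝ)*(-a)) * (2:ℝ)^(((k:ℝ)+1)*D)) * (s ^ (-a) * s ^ D) := by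
            ring
        _ = Cν' * (2 ^ (D:ℝ) * (2:ℝ)^((-b)*(k:ℝ))) * s ^ (-b) := by rw [e4, hss]
        _ = Cν' * 2 ^ (D:ℝ) * s ^ (-b) * (2:ℝ)^((-b)*(k:ℝ)) := by ring
    calc (∫⁻ ξ in ball η (2^(k+1) * s) \ ball η (2^k * s),
          ENNReal.ofReal ((max (dist ξ η) s) ^ (-a)) ∂ν)
        ≤ ∫⁻ _ in ball η (2^(k+1) * s) \ ball η (2^k * s),
            ENNReal.ofReal ((2^k * s) ^ (-a)) ∂ν :=
          setLIntegral_mono measurable_const hbd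
      _ = ENNReal.ofReal ((2^k * s) ^ (-a)) * ν (ball η (2^(k+1) * s) \ ball η (2^k * s)) :=
          setLIntegral_const _ _
      _ ≤ ENNReal.ofReal ((2^k * s) ^ (-a)) * ν (ball η (2^(k+1) * s)) :=
          mul_le_mul_right (measure_mono Set.diff_subset) _
      _ ≤ ENNReal.ofReal ((2^k * s) ^ (-a)) * ENNReal.ofReal (Cν' * (2^(k+1) * s) ^ D) :=
          mul_le_mul_right (hup η _ h2k1) _
      _ = ENNReal.ofReal (Cν' * 2 ^ (D:ℝ) * s ^ (-b) * r^k) := by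
          rw [← ENNReal.ofReal_mul (Real.rpow_nonneg h2k.le _), key]
  -- geometric series
  have hsum : (∑' k : ℕ, ENNReal.ofReal (Cν' * 2 ^ (D:ℝ) * s ^ (-b) * r^k))
      = ENNReal.ofReal (Cν' * 2 ^ (D:ℝ) * (1 - r)⁻¹ * s ^ (-b)) := by
    have hc : (0:ℝ) ≤ Cν' * 2 ^ (D:ℝ) * s ^ (-b) := by
      have := Real.rpow_nonneg hs.le (-b)
      positivity
    have h1r : (0:ℝ) < 1 - r := by linarith
    calc (∑' k : ℕ, ENNReal.ofReal (Cν' * 2 ^ (D:ℝ) * s ^ (-b) * r^k))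
        = ∑' k : ℕ, ENNReal.ofReal (Cν' * 2 ^ (D:ℝ) * s ^ (-b)) * (ENNReal.ofReal r)^k := by
          congr 1; funext k
          rw [ENNReal.ofReal_mul hc, ENNReal.ofReal_pow hr0.le]
      _ = ENNReal.ofReal (Cν' * 2 ^ (D:ℝ) * s ^ (-b)) * (1 - ENNReal.ofReal r)⁻¹ := by
          rw [ENNReal.tsum_mul_left, ENNReal.tsum_geometric]
      _ = ENNReal.ofReal (Cν' * 2 ^ (D:ℝ) * (1 - r)⁻¹ * s ^ (-b)) := by
          rw [← ENNReal.ofReal_one, ← ENNReal.ofReal_sub _ hr0.le,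
            ← ENNReal.ofReal_inv_of_pos h1r, ← ENNReal.ofReal_mul hc]
          congr 1
          ring
  -- upper bound
  have hupper : A ≤ ENNReal.ofReal ((Cν' + Cν' * 2 ^ (D:ℝ) * (1 - r)⁻¹) * s ^ (-b)) := by
    calc A = ∫⁻ ξ in (Set.univ : Set Ω), ENNReal.ofReal ((max (dist ξ η) s) ^ (-a)) ∂ν :=
          (setLIntegral_univ _).symm
      _ = ∫⁻ ξ in ball η s ∪ ⋃ k : ℕ, (ball η (2^(k+1) * s) \ ball η (2^k * s)),
            ENNReal.ofReal ((max (dist ξ η) s) ^ (-a)) ∂ν := by rw [← hU]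
      _ ≤ (∫⁻ ξ in ball η s, ENNReal.ofReal ((max (dist ξ η) s) ^ (-a)) ∂ν)
          + ∫⁻ ξ in ⋃ k : ℕ, (ball η (2^(k+1) * s) \ ball η (2^k * s)),
            ENNReal.ofReal ((max (dist ξ η) s) ^ (-a)) ∂ν := lintegral_union_le _ _ _
      _ ≤ ENNReal.ofReal (Cν' * s ^ (-b))
          + ∑' k : ℕ, ENNReal.ofReal (Cν' * 2 ^ (D:ℝ) * s ^ (-b) * r^k) := by
          apply add_le_add hterm_ball
          exact (lintegral_iUnion_le _ _).trans (ENNReal.tsum_le_tsum hterm_k)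
      _ = ENNReal.ofReal ((Cν' + Cν' * 2 ^ (D:ℝ) * (1 - r)⁻¹) * s ^ (-b)) := by
          have h1r : (0:ℝ) < 1 - r := by linarith
          rw [hsum, ← ENNReal.ofReal_add (by positivity) (by positivity)]
          congr 1
          ring
  have hKeq : Cν' + Cν' * 2 ^ (D:ℝ) * (1 - r)⁻¹ = K := hKdef.symm
  rw [hKeq] at hupper
  have hAne : A ≠ ⊤ := (lt_of_le_of_lt hupper ENNReal.ofReal_lt_top).ne
  have hsb : (0:ℝ) ≤ s ^ (-b) := Real.rpow_nonneg hs.le _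
  constructor
  · rw [hint]
    have h1 : Cν⁻¹ * s ^ (-b) ≤ A.toReal :=
      (ENNReal.ofReal_le_iff_le_toReal hAne).mp hlow
    have h2 : (Cν + K)⁻¹ ≤ Cν⁻¹ := by
      apply inv_anti₀ (by linarith) (by linarith)
    calc (Cν + K)⁻¹ * s ^ (-b) ≤ Cν⁻¹ * s ^ (-b) :=
          mul_le_mul_of_nonneg_right h2 hsb
      _ ≤ A.toReal := h1
  · rw [hint]
    have h1 : A.toReal ≤ K * s ^ (-b) :=
      ENNReal.toReal_le_of_le_ofReal (by positivity) hupper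
    calc A.toReal ≤ K * s ^ (-b) := h1
      _ ≤ (Cν + K) * s ^ (-b) := mul_le_mul_of_nonneg_right (by linarith) hsb
end
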